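/- arXiv:1612.09544 — 4 statements merged into one kernel-verified Lean document; each statement's English description precedes it below -/
import Mathlib

section
/- Let $\lambda > 0$ and let $u, v$ be real numbers with $w := \max\{|u|,|v|\}$ satisfying $w^4 < \lambda$. Let $\pi_\lambda(t) := \exp(-\lambda(1 - \cos(t/\sqrt{\lambda})))$. Then $|\pi_\lambda(v) - e^{-v^2/2}| \le C\, e^{-v^2/2}\, v^4 / \lambda$ for an absolute constant $C$. -/
lemma aux_sin_lb (x : ℝ) (hx : 0 ≤ x) : x - x ^ 3 / 6 ≤ Real.sin x := by
  have hd : ∀ y : ℝ, HasDerivAt (fun y => Real.sin y - (y - y ^ 3 / 6))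
      (Real.cos y - (1 - y ^ 2 / 2)) y := by
    intro y
    have h1 := Real.hasDerivAt_sin y
    have h2 := (hasDerivAt_id y).sub ((hasDerivAt_pow 3 y).div_const 6)
    have h3 := h1.sub h2
    exact h3.congr_deriv (by push_cast; ring)
  have hm : MonotoneOn (fun y => Real.sin y - (y - y ^ 3 / 6)) (Set.Ici (0:ℝ)) := by
    apply monotoneOn_of_deriv_nonneg (convex_Ici 0)
    · exact (Continuous.sub Real.continuous_sin (by continuity)).continuousOn
    · intro y _; exact (hd y).differentiableAt.differentiableWithinAt
    · intro y _
      rw [(hd y).deriv]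
      have := Real.one_sub_sq_div_two_le_cos (x := y)
      linarith
  have h0 := hm (Set.mem_Ici.mpr le_rfl) (Set.mem_Ici.mpr hx) hx
  simp at h0
  linarith

lemma aux_cos_ub (x : ℝ) : Real.cos x ≤ 1 - x ^ 2 / 2 + x ^ 4 / 24 := by
  have key : ∀ y : ℝ, 0 ≤ y → Real.cos y ≤ 1 - y ^ 2 / 2 + y ^ 4 / 24 := by
    intro y hy
    have hd : ∀ z : ℝ, HasDerivAt (fun z => (1 - z ^ 2 / 2 + z ^ 4 / 24) - Real.cos z)
        (Real.sin z - (z - z ^ 3 / 6)) z := by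
      intro z
      have h1 := Real.hasDerivAt_cos z
      have h2 := (((hasDerivAt_pow 2 z).div_const 2).const_sub 1).add
        ((hasDerivAt_pow 4 z).div_const 24)
      have h3 := h2.sub h1
      exact h3.congr_deriv (by push_cast; ring)
    have hm : MonotoneOn (fun z => (1 - z ^ 2 / 2 + z ^ 4 / 24) - Real.cos z)
        (Set.Ici (0:ℝ)) := by
      apply monotoneOn_of_deriv_nonneg (convex_Ici 0)
      · exact (Continuous.sub (by continuity) Real.continuous_cos).continuousOn
      · intro z _; exact (hd z).differentiableAt.differentiableWithinAt
      · intro z hz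
        rw [(hd z).deriv]
        have := aux_sin_lb z (le_of_lt (by simpa using hz))
        linarith
    have h0 := hm (Set.mem_Ici.mpr le_rfl) (Set.mem_Ici.mpr hy) hy
    simp at h0
    linarith
  rcases le_or_gt 0 x with hx | hx
  · exact key x hx
  · have := key (-x) (by linarith)
    rw [Real.cos_neg] at this
    calc Real.cos x ≤ 1 - (-x) ^ 2 / 2 + (-x) ^ 4 / 24 := this
      _ = 1 - x ^ 2 / 2 + x ^ 4 / 24 := by ring

/-- If `w := max{|u|,|v|}` satisfies `w⁴ < λ`, then the Poisson characteristic function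
modulus `π_λ(v) = exp(-λ(1 - cos(v/√λ)))` is within `C e^{-v²/2} v⁴/λ` of the Gaussian
characteristic function `e^{-v²/2}`. -/
theorem stmt4 : ∃ C : ℝ, 0 < C ∧ ∀ lam u v : ℝ, 0 < lam →
    (max |u| |v|) ^ 4 < lam →
    |Real.exp (-(lam * (1 - Real.cos (v / Real.sqrt lam)))) - Real.exp (-(v ^ 2) / 2)|
      ≤ C * Real.exp (-(v ^ 2) / 2) * v ^ 4 / lam := by
  refine ⟨1, one_pos, ?_⟩
  intro lam u v hlam hw
  set s := v / Real.sqrt lam with hs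
  have hsq : Real.sqrt lam ^ 2 = lam := Real.sq_sqrt hlam.le
  have hsqpos : 0 < Real.sqrt lam := Real.sqrt_pos.mpr hlam
  have hs2 : s ^ 2 * lam = v ^ 2 := by
    rw [hs, div_pow, hsq]; field_simp
  have hs4 : s ^ 4 * lam = v ^ 4 / lam := by
    have h4 : Real.sqrt lam ^ 4 = lam ^ 2 := by
      rw [show (4:ℕ) = 2 * 2 from rfl, pow_mul, hsq]
    rw [hs, div_pow, h4]
    field_simp
  have hv4 : v ^ 4 < lam := by
    have h1 : |v| ≤ max |u| |v| := le_max_right _ _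
    have h2 : v ^ 4 = |v| ^ 4 := by rw [← abs_pow, abs_of_nonneg (by positivity)]
    rw [h2]
    exact lt_of_le_of_lt (pow_le_pow_left₀ (abs_nonneg v) h1 4) hw
  have hcos_lb : 1 - s ^ 2 / 2 ≤ Real.cos s := Real.one_sub_sq_div_two_le_cos
  have hcos_ub : Real.cos s ≤ 1 - s ^ 2 / 2 + s ^ 4 / 24 := aux_cos_ub s
  have hA_le : lam * (1 - Real.cos s) ≤ v ^ 2 / 2 := by nlinarith
  have hA_ge : v ^ 2 / 2 - v ^ 4 / (24 * lam) ≤ lam * (1 - Real.cos s) := by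
    have h5 : lam * (1 - Real.cos s - (s ^ 2 / 2 - s ^ 4 / 24)) ≥ 0 :=
      mul_nonneg hlam.le (by linarith)
    have : v ^ 4 / (24 * lam) = s ^ 4 * lam / 24 := by rw [hs4]; ring
    nlinarith
  set δ := v ^ 2 / 2 - lam * (1 - Real.cos s) with hδdef
  clear_value δ
  have hδ0 : 0 ≤ δ := by simp only [hδdef]; linarith
  have hδle : δ ≤ v ^ 4 / (24 * lam) := by simp only [hδdef]; linarith
  have hδsmall : δ ≤ 1 / 24 := by
    have : v ^ 4 / (24 * lam) ≤ 1 / 24 := by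
      rw [div_le_div_iff₀ (by positivity) (by norm_num)]
      nlinarith
    linarith
  have hexp : Real.exp (-(lam * (1 - Real.cos s))) = Real.exp (-(v ^ 2) / 2) * Real.exp δ := by
    rw [← Real.exp_add]
    congr 1
    simp only [hδdef]
    ring
  have key : Real.exp δ - 1 ≤ 2 * δ := by
    have h1 : 1 - δ ≤ Real.exp (-δ) := by
      have := Real.add_one_le_exp (-δ); linarith
    have h2 : Real.exp δ * (1 - δ) ≤ 1 := by
      have h3 := mul_le_mul_of_nonneg_left h1 (Real.exp_pos δ).le
      rwa [← Real.exp_add, add_neg_cancel, Real.exp_zero] at h3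
    have he2 : Real.exp δ ≤ 24 / 23 := by
      nlinarith [mul_nonneg (Real.exp_pos δ).le (by linarith : (0:ℝ) ≤ 1 / 24 - δ)]
    have h4 : δ * Real.exp δ ≤ δ * (24 / 23) := mul_le_mul_of_nonneg_left he2 hδ0
    nlinarith
  have habs : |Real.exp (-(lam * (1 - Real.cos s))) - Real.exp (-(v ^ 2) / 2)|
      = Real.exp (-(v ^ 2) / 2) * (Real.exp δ - 1) := by
    rw [hexp, abs_of_nonneg]
    · ring
    · have : (1:ℝ) ≤ Real.exp δ := Real.one_le_exp hδ0
      nlinarith [Real.exp_pos (-(v ^ 2) / 2)]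
  rw [habs]
  have hfin : Real.exp δ - 1 ≤ v ^ 4 / lam := by
    have h12 : v ^ 4 / (12 * lam) ≤ v ^ 4 / lam :=
      div_le_div_of_nonneg_left (by positivity) hlam (by linarith)
    have : 2 * δ ≤ v ^ 4 / (12 * lam) := by
      rw [show v ^ 4 / (12 * lam) = 2 * (v ^ 4 / (24 * lam)) by ring]
      linarith
    linarith
  calc Real.exp (-(v ^ 2) / 2) * (Real.exp δ - 1)
      ≤ Real.exp (-(v ^ 2) / 2) * (v ^ 4 / lam) :=
        mul_le_mul_of_nonneg_left hfin (Real.exp_pos _).le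
    _ = 1 * Real.exp (-(v ^ 2) / 2) * v ^ 4 / lam := by ring
end

section
/- Let $\mathfrak{L} \ge 1$ and let $j$ be a real number. Then $\int_0^{2\pi \mathfrak{L}} \int_0^{2\pi \mathfrak{L}} e^{-(u-u')^2} e^{-i (j/\mathfrak{L})(u - u')} \, du \, du' = 2\pi^{3/2} e^{-j^2/(4\mathfrak{L}^2)} \mathfrak{L} + O\left(e^{j^2/(4\mathfrak{L}^2)}\right)$ with an absolute implied constant. -/
open MeasureTheory Set

/-- For `𝔏 ≥ 1` and real `j`,
`∫₀^{2π𝔏}∫₀^{2π𝔏} e^{-(u-u')²} e^{-i(j/𝔏)(u-u')} du du'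
  = 2π^{3/2} e^{-j²/(4𝔏²)} 𝔏 + O(e^{j²/(4𝔏²)})` with an absolute implied constant. -/
theorem stmt8 : ∃ C : ℝ, 0 < C ∧ ∀ L j : ℝ, 1 ≤ L →
    ‖(∫ u' in (0:ℝ)..(2 * Real.pi * L), ∫ u in (0:ℝ)..(2 * Real.pi * L),
        Complex.exp (-(((u - u') ^ 2 : ℝ) : ℂ)) *
          Complex.exp (-(Complex.I * ((j / L : ℝ) : ℂ) * (((u - u' : ℝ)) : ℂ))))
      - ((2 * Real.pi ^ ((3 : ℝ) / 2) * Real.exp (-(j ^ 2) / (4 * L ^ 2)) * L : ℝ) : ℂ)‖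
      ≤ C * Real.exp (j ^ 2 / (4 * L ^ 2)) := by
  refine ⟨13, by norm_num, fun L j hL => ?_⟩
  have hL0 : (0:ℝ) < L := lt_of_lt_of_le one_pos hL
  set T : ℝ := 2 * Real.pi * L with hTdef
  have hT : 0 < T := by positivity
  set a : ℝ := j / L with ha
  set f : ℝ → ℂ := fun t => Complex.exp (-((t ^ 2 : ℝ) : ℂ)) *
      Complex.exp (-(Complex.I * ((a : ℝ) : ℂ) * ((t : ℝ) : ℂ))) with hf
  have hgoal : (∫ u' in (0:ℝ)..T, ∫ u in (0:ℝ)..T,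
        Complex.exp (-(((u - u') ^ 2 : ℝ) : ℂ)) *
          Complex.exp (-(Complex.I * ((j / L : ℝ) : ℂ) * (((u - u' : ℝ)) : ℂ))))
      = ∫ u' in (0:ℝ)..T, ∫ u in (0:ℝ)..T, f (u - u') := rfl
  rw [hgoal]
  -- integrability of f
  have hfi : Integrable f := by
    have h1 : Integrable (fun t : ℝ => Complex.exp ((-1) * t ^ 2 + (-(Complex.I * a)) * t + 0)) :=
      integrable_cexp_quadratic (by norm_num) _ _
    refine h1.congr (Filter.Eventually.of_forall fun t => ?_)
    rw [hf]
    simp only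
    rw [← Complex.exp_add]
    congr 1
    push_cast
    ring
  -- norm of f
  have hnorm : ∀ t : ℝ, ‖f t‖ = Real.exp (-t ^ 2) := by
    intro t
    rw [hf]
    simp only [norm_mul, Complex.norm_exp]
    rw [← Real.exp_add]
    congr 1
    simp [Complex.neg_re, Complex.mul_re, Complex.mul_im, ← Complex.ofReal_pow]
  -- Gaussian integrability
  have hg2 : Integrable (fun t : ℝ => Real.exp (-t ^ 2)) := by
    have := integrable_exp_neg_mul_sq (b := (1:ℝ)) one_pos
    simpa using this
  have hghalf : Integrable (fun t : ℝ => Real.exp (-t ^ 2 / 2)) := by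
    have h := integrable_exp_neg_mul_sq (b := (1/2:ℝ)) (by norm_num)
    have he : (fun t : ℝ => Real.exp (-(1/2) * t ^ 2)) = fun t : ℝ => Real.exp (-t ^ 2 / 2) :=
      funext fun t => by congr 1; ring
    rwa [he] at h
  have hgauss_half : ∫ t : ℝ, Real.exp (-t ^ 2 / 2) = Real.sqrt (2 * Real.pi) := by
    have : (fun t : ℝ => Real.exp (-t ^ 2 / 2)) = fun t : ℝ => Real.exp (-(1/2) * t ^ 2) := by
      funext t; congr 1; ring
    rw [this, integral_gaussian]
    rw [show Real.pi / (1/2) = 2 * Real.pi by ring]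
  -- tail bounds
  have tail_Ioi : ∀ x : ℝ, 0 ≤ x →
      (∫ t in Ioi x, Real.exp (-t ^ 2)) ≤ Real.sqrt (2 * Real.pi) * Real.exp (-x ^ 2 / 2) := by
    intro x hx
    have step1 : (∫ t in Ioi x, Real.exp (-t ^ 2))
        ≤ ∫ t in Ioi x, Real.exp (-x ^ 2 / 2) * Real.exp (-t ^ 2 / 2) := by
      refine setIntegral_mono_on hg2.integrableOn (hghalf.integrableOn.const_mul _)
        measurableSet_Ioi fun t ht => ?_
      rw [← Real.exp_add, Real.exp_le_exp]
      have h1 : x ≤ t := le_of_lt ht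
      nlinarith
    calc (∫ t in Ioi x, Real.exp (-t ^ 2))
        ≤ ∫ t in Ioi x, Real.exp (-x ^ 2 / 2) * Real.exp (-t ^ 2 / 2) := step1
      _ = Real.exp (-x ^ 2 / 2) * ∫ t in Ioi x, Real.exp (-t ^ 2 / 2) := integral_const_mul _ _
      _ ≤ Real.exp (-x ^ 2 / 2) * ∫ t : ℝ, Real.exp (-t ^ 2 / 2) := by
          refine mul_le_mul_of_nonneg_left ?_ (Real.exp_pos _).le
          exact setIntegral_le_integral hghalf
            (Filter.Eventually.of_forall fun t => (Real.exp_pos _).le)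
      _ = Real.sqrt (2 * Real.pi) * Real.exp (-x ^ 2 / 2) := by rw [hgauss_half, mul_comm]
  have tail_Iic : ∀ x : ℝ, 0 ≤ x →
      (∫ t in Iic (-x), Real.exp (-t ^ 2)) ≤ Real.sqrt (2 * Real.pi) * Real.exp (-x ^ 2 / 2) := by
    intro x hx
    have step1 : (∫ t in Iic (-x), Real.exp (-t ^ 2))
        ≤ ∫ t in Iic (-x), Real.exp (-x ^ 2 / 2) * Real.exp (-t ^ 2 / 2) := by
      refine setIntegral_mono_on hg2.integrableOn (hghalf.integrableOn.const_mul _)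
        measurableSet_Iic fun t ht => ?_
      rw [← Real.exp_add, Real.exp_le_exp]
      have h1 : t ≤ -x := ht
      nlinarith
    calc (∫ t in Iic (-x), Real.exp (-t ^ 2))
        ≤ ∫ t in Iic (-x), Real.exp (-x ^ 2 / 2) * Real.exp (-t ^ 2 / 2) := step1
      _ = Real.exp (-x ^ 2 / 2) * ∫ t in Iic (-x), Real.exp (-t ^ 2 / 2) := integral_const_mul _ _
      _ ≤ Real.exp (-x ^ 2 / 2) * ∫ t : ℝ, Real.exp (-t ^ 2 / 2) := by
          refine mul_le_mul_of_nonneg_left ?_ (Real.exp_pos _).le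
          exact setIntegral_le_integral hghalf
            (Filter.Eventually.of_forall fun t => (Real.exp_pos _).le)
      _ = Real.sqrt (2 * Real.pi) * Real.exp (-x ^ 2 / 2) := by rw [hgauss_half, mul_comm]
  -- the primitive Φ
  set Φ : ℝ → ℂ := fun x => ∫ t in Iic x, f t with hΦdef
  have hΦeq : ∀ x : ℝ, Φ x = Φ 0 + ∫ t in (0:ℝ)..x, f t := by
    intro x
    rw [← intervalIntegral.integral_Iic_sub_Iic hfi.integrableOn hfi.integrableOn]
    ring
  have hΦc : Continuous Φ := by
    have : Φ = fun x => Φ 0 + ∫ t in (0:ℝ)..x, f t := funext hΦeq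
    rw [this]
    exact continuous_const.add
      (intervalIntegral.continuous_primitive (fun a b => hfi.intervalIntegrable) 0)
  -- the full Gaussian integral
  have hG : (∫ t : ℝ, f t)
      = ((Real.sqrt Real.pi * Real.exp (-(j ^ 2) / (4 * L ^ 2)) : ℝ) : ℂ) := by
    have h1 := fourierIntegral_gaussian (b := 1) (by norm_num) (-(a:ℂ))
    have h2 : (fun x : ℝ => Complex.exp (Complex.I * (-(a:ℂ)) * x) * Complex.exp (-1 * x ^ 2))
        = f := by
      funext t
      rw [hf]
      simp only
      rw [mul_comm]
      congr 1
      · push_cast; ring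
      · ring_nf
    rw [← h2, h1]
    have hx : ((Real.pi : ℂ) / 1) ^ (1 / 2 : ℂ) = ((Real.sqrt Real.pi : ℝ) : ℂ) := by
      rw [div_one, Real.sqrt_eq_rpow]
      rw [Complex.ofReal_cpow Real.pi_pos.le]
      norm_num
    have hy : Complex.exp (-(-(a:ℂ)) ^ 2 / (4 * 1))
        = ((Real.exp (-(j ^ 2) / (4 * L ^ 2)) : ℝ) : ℂ) := by
      rw [Complex.ofReal_exp]
      congr 1
      have h3 : -(j ^ 2) / (4 * L ^ 2) = -(a ^ 2) / 4 := by
        rw [ha]; field_simp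
      rw [h3]
      push_cast
      ring
    rw [hx, hy, ← Complex.ofReal_mul]
  set G : ℂ := ((Real.sqrt Real.pi * Real.exp (-(j ^ 2) / (4 * L ^ 2)) : ℝ) : ℂ) with hGdef
  have hsplit : ∀ x : ℝ, Φ x - G = -∫ t in Ioi x, f t := by
    intro x
    rw [← hG, ← intervalIntegral.integral_Iic_add_Ioi hfi.integrableOn hfi.integrableOn]
    ring
  -- inner integral identity
  have key : ∀ u' : ℝ, (∫ u in (0:ℝ)..T, f (u - u')) = Φ (T - u') - Φ (-u') := by
    intro u'
    rw [intervalIntegral.integral_comp_sub_right f u',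
      ← intervalIntegral.integral_Iic_sub_Iic hfi.integrableOn hfi.integrableOn]
    rw [hΦdef]
    simp [zero_sub]
  set I' : ℝ → ℂ := fun u' => Φ (T - u') - Φ (-u') with hI'def
  have hI'c : Continuous I' :=
    (hΦc.comp (continuous_const.sub continuous_id)).sub (hΦc.comp continuous_neg)
  -- rewrite the double integral
  have hrw : (∫ u' in (0:ℝ)..T, ∫ u in (0:ℝ)..T, f (u - u')) = ∫ u' in (0:ℝ)..T, I' u' :=
    intervalIntegral.integral_congr fun u' _ => key u'
  -- main term
  have hMain : ((2 * Real.pi ^ ((3 : ℝ) / 2) * Real.exp (-(j ^ 2) / (4 * L ^ 2)) * L : ℝ) : ℂ)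
      = ((T * (Real.sqrt Real.pi * Real.exp (-(j ^ 2) / (4 * L ^ 2))) : ℝ) : ℂ) := by
    have hpi32 : Real.pi ^ ((3:ℝ)/2) = Real.pi * Real.sqrt Real.pi := by
      rw [show (3:ℝ)/2 = 1 + 1/2 by norm_num, Real.rpow_add Real.pi_pos, Real.rpow_one,
        Real.sqrt_eq_rpow]
    congr 1
    rw [hpi32, hTdef]
    ring
  -- pull out the constant
  have hsub : (∫ u' in (0:ℝ)..T, I' u')
      - ((T * (Real.sqrt Real.pi * Real.exp (-(j ^ 2) / (4 * L ^ 2))) : ℝ) : ℂ)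
      = ∫ u' in (0:ℝ)..T, (I' u' - G) := by
    rw [intervalIntegral.integral_sub (hI'c.intervalIntegrable _ _)
      intervalIntegrable_const, intervalIntegral.integral_const]
    rw [hGdef]
    congr 1
    rw [sub_zero]
    rw [Complex.real_smul, Complex.ofReal_mul]
  -- the bound function
  set bnd : ℝ → ℝ := fun u' => Real.sqrt (2 * Real.pi) * Real.exp (-(T - u') ^ 2 / 2)
      + Real.sqrt (2 * Real.pi) * Real.exp (-u' ^ 2 / 2) with hbnd
  have hbndc : Continuous bnd := by
    apply Continuous.add <;> exact continuous_const.mul (by fun_prop)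
  -- pointwise bound
  have hpt : ∀ u' ∈ Icc (0:ℝ) T, ‖I' u' - G‖ ≤ bnd u' := by
    intro u' hu'
    have h1 : I' u' - G = -(∫ t in Ioi (T - u'), f t) - Φ (-u') := by
      rw [hI'def]
      simp only
      rw [← hsplit (T - u')]
      ring
    rw [h1]
    calc ‖-(∫ t in Ioi (T - u'), f t) - Φ (-u')‖
        ≤ ‖∫ t in Ioi (T - u'), f t‖ + ‖Φ (-u')‖ := by
          refine le_trans (norm_sub_le _ _) ?_
          rw [norm_neg]
      _ ≤ (∫ t in Ioi (T - u'), ‖f t‖) + ∫ t in Iic (-u'), ‖f t‖ := by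
          gcongr <;> exact norm_integral_le_integral_norm _
      _ = (∫ t in Ioi (T - u'), Real.exp (-t ^ 2)) + ∫ t in Iic (-u'), Real.exp (-t ^ 2) := by
          simp only [hnorm]
      _ ≤ bnd u' := by
          rw [hbnd]
          exact add_le_add (tail_Ioi (T - u') (by linarith [hu'.2]))
            (tail_Iic u' hu'.1)
  -- bound the integral of bnd
  have hbndint : (∫ u' in (0:ℝ)..T, bnd u') ≤ 4 * Real.pi := by
    have hc1 : Continuous fun u' : ℝ => Real.sqrt (2 * Real.pi) * Real.exp (-(T - u') ^ 2 / 2) :=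
      continuous_const.mul (by fun_prop)
    have hc2 : Continuous fun u' : ℝ => Real.sqrt (2 * Real.pi) * Real.exp (-u' ^ 2 / 2) :=
      continuous_const.mul (by fun_prop)
    have hS : (∫ u' in (0:ℝ)..T, Real.exp (-u' ^ 2 / 2)) ≤ Real.sqrt (2 * Real.pi) := by
      rw [intervalIntegral.integral_of_le hT.le, ← hgauss_half]
      exact setIntegral_le_integral hghalf (Filter.Eventually.of_forall fun t => (Real.exp_pos _).le)
    have hrefl : (∫ u' in (0:ℝ)..T, Real.exp (-(T - u') ^ 2 / 2))
        = ∫ u' in (0:ℝ)..T, Real.exp (-u' ^ 2 / 2) := by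
      rw [intervalIntegral.integral_comp_sub_left (fun u : ℝ => Real.exp (-u ^ 2 / 2)) T]
      norm_num
    have hsq : Real.sqrt (2 * Real.pi) * Real.sqrt (2 * Real.pi) = 2 * Real.pi :=
      Real.mul_self_sqrt (by positivity)
    calc (∫ u' in (0:ℝ)..T, bnd u')
        = (∫ u' in (0:ℝ)..T, Real.sqrt (2 * Real.pi) * Real.exp (-(T - u') ^ 2 / 2))
          + ∫ u' in (0:ℝ)..T, Real.sqrt (2 * Real.pi) * Real.exp (-u' ^ 2 / 2) := by
          rw [hbnd, intervalIntegral.integral_add (hc1.intervalIntegrable _ _)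
            (hc2.intervalIntegrable _ _)]
      _ = Real.sqrt (2 * Real.pi) * (∫ u' in (0:ℝ)..T, Real.exp (-(T - u') ^ 2 / 2))
          + Real.sqrt (2 * Real.pi) * ∫ u' in (0:ℝ)..T, Real.exp (-u' ^ 2 / 2) := by
          rw [intervalIntegral.integral_const_mul, intervalIntegral.integral_const_mul]
      _ ≤ Real.sqrt (2 * Real.pi) * Real.sqrt (2 * Real.pi)
          + Real.sqrt (2 * Real.pi) * Real.sqrt (2 * Real.pi) := by
          rw [hrefl]
          have h0 : (0:ℝ) ≤ Real.sqrt (2 * Real.pi) := Real.sqrt_nonneg _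
          exact add_le_add (mul_le_mul_of_nonneg_left hS h0) (mul_le_mul_of_nonneg_left hS h0)
      _ = 4 * Real.pi := by rw [hsq]; ring
  -- put it together
  rw [hrw, hMain, hsub]
  have hbound : ‖∫ u' in (0:ℝ)..T, (I' u' - G)‖ ≤ |∫ u' in (0:ℝ)..T, bnd u'| := by
    apply intervalIntegral.norm_integral_le_abs_of_norm_le
    · rw [uIoc_of_le hT.le]
      exact (ae_restrict_iff' measurableSet_Ioc).2 (Filter.Eventually.of_forall
        fun u' hu' => hpt u' ⟨hu'.1.le, hu'.2⟩)
    · exact hbndc.intervalIntegrable _ _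
  have habs : |∫ u' in (0:ℝ)..T, bnd u'| ≤ 4 * Real.pi := by
    rw [abs_of_nonneg]
    · exact hbndint
    · apply intervalIntegral.integral_nonneg hT.le
      intro u _
      rw [hbnd]
      positivity
  have hexp1 : (1:ℝ) ≤ Real.exp (j ^ 2 / (4 * L ^ 2)) :=
    Real.one_le_exp (by positivity)
  calc ‖∫ u' in (0:ℝ)..T, (I' u' - G)‖ ≤ 4 * Real.pi := le_trans hbound habs
    _ ≤ 13 := by nlinarith [Real.pi_lt_d2]
    _ ≤ 13 * Real.exp (j ^ 2 / (4 * L ^ 2)) := by nlinarith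
end

section
/- Let $b > 0$ and $\alpha > 0$. Then $\lim_{T \to \infty} \frac{1}{2\pi i} \int_{\alpha - iT}^{\alpha + iT} b^s \frac{ds}{s}$ equals $1$ if $b > 1$, equals $1/2$ if $b = 1$, and equals $0$ if $0 < b < 1$. -/
open Complex Filter Set intervalIntegral Real Interval Topology

noncomputable def AA (L x T : ℝ) : ℂ := ∫ t in (-T)..T, Complex.exp ((x + t*I) * L) / (x + t*I)

lemma ne_zero_of_re_ne {x : ℝ} (hx : x ≠ 0) (t : ℝ) : (x : ℂ) + t * I ≠ 0 := by
  intro h; apply hx; simpa using congrArg Complex.re h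

lemma integral_exp_mul (L a c : ℝ) (hL : L ≠ 0) :
    ∫ x in a..c, Real.exp (x * L) = (Real.exp (c * L) - Real.exp (a * L)) / L := by
  have key : ∀ x : ℝ, HasDerivAt (fun x : ℝ => Real.exp (x * L) / L) (Real.exp (x * L)) x := by
    intro x
    have h1 : HasDerivAt (fun x : ℝ => x * L) L x := by simpa using (hasDerivAt_id x).mul_const L
    have := ((Real.hasDerivAt_exp (x * L)).comp x h1).div_const L
    refine this.congr_deriv ?_
    field_simp
  rw [intervalIntegral.integral_eq_sub_of_hasDerivAt (fun x _ => key x)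
    ((Real.continuous_exp.comp (continuous_id.mul continuous_const)).intervalIntegrable _ _)]
  ring

-- horizontal segment bound
lemma horiz_bound (L a c y : ℝ) (hac : a ≤ c) (hy : y ≠ 0) :
    ‖∫ x in a..c, Complex.exp (((x:ℂ) + y*I) * L) / ((x:ℂ) + y*I)‖
      ≤ |∫ x in a..c, Real.exp (x * L) / (|y| : ℝ)| := by
  apply intervalIntegral.norm_integral_le_abs_of_norm_le
  · apply MeasureTheory.ae_of_all
    intro t
    rw [norm_div]
    have h1 : ‖Complex.exp (((t:ℂ) + y*I) * L)‖ = Real.exp (t * L) := by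
      rw [Complex.norm_exp]
      congr 1
      simp [add_mul, Complex.mul_re]
    have h2 : (|y| : ℝ) ≤ ‖(t:ℂ) + y*I‖ := by
      have him : ((t:ℂ) + y*I).im = y := by simp
      calc (|y| : ℝ) = |((t:ℂ) + y*I).im| := by rw [him]
        _ ≤ ‖(t:ℂ) + y*I‖ := Complex.abs_im_le_norm _
        _ = ‖(t:ℂ) + y*I‖ := rfl
    rw [h1]
    exact div_le_div_of_nonneg_left (by positivity) (abs_pos.2 hy) h2
  · exact ((Real.continuous_exp.comp (continuous_id.mul continuous_const)).div_const _).intervalIntegrable _ _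

lemma contAA {L x : ℝ} (hx : x ≠ 0) :
    Continuous fun t : ℝ => Complex.exp (((x:ℂ) + t*I) * L) / ((x:ℂ) + t*I) := by
  apply Continuous.div
  · exact Complex.continuous_exp.comp (by continuity)
  · continuity
  · exact fun t => ne_zero_of_re_ne hx t

lemma AA_tendsto_zero (L : ℝ) (hL : L < 0) (α : ℝ) (hα : 0 < α) :
    Tendsto (fun T => AA L α T) atTop (𝓝 0) := by
  have hL' : L ≠ 0 := ne_of_lt hL
  have bound : ∀ T : ℝ, 0 < T → ‖AA L α T‖ ≤ 2 * Real.exp (α*L) / (-L * T) := by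
    intro T hT
    have key : ∀ σ : ℝ, α ≤ σ →
        ‖AA L α T‖ ≤ 2*T*Real.exp (σ*L)/α + 2 * Real.exp (α*L) / (-L * T) := by
      intro σ hσ
      -- rectangle identity
      set f : ℂ → ℂ := fun s => Complex.exp (s * L) / s with hf
      have hdiff : DifferentiableOn ℂ f ([[(α:ℝ), σ]] ×ℂ [[-T, T]]) := by
        intro s hs
        have hs0 : s ≠ 0 := by
          intro h
          have : s.re ∈ [[(α:ℝ), σ]] := hs.1
          rw [h] at this
          simp [Set.uIcc_of_le hσ] at this
          linarith [this.1]
        exact ((Complex.differentiable_exp.comp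
          (differentiable_id.mul_const (L:ℂ))).differentiableAt.div differentiableAt_id hs0).differentiableWithinAt
      have rect : (∫ x in α..σ, f ((x:ℂ) + (-T:ℝ)*I)) - (∫ x in α..σ, f ((x:ℂ) + (T:ℝ)*I))
          + I • (∫ t in (-T)..T, f ((σ:ℂ) + (t:ℝ)*I)) - I • (∫ t in (-T)..T, f ((α:ℂ) + (t:ℝ)*I)) = 0 := by
        have h := Complex.integral_boundary_rect_eq_zero_of_differentiableOn f
          (⟨α, -T⟩ : ℂ) (⟨σ, T⟩ : ℂ) (by exact hdiff)
        push_cast at h ⊢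
        convert h using 4
      set Hm : ℂ := ∫ x in α..σ, f ((x:ℂ) + (-T:ℝ)*I) with hHm
      set Hp : ℂ := ∫ x in α..σ, f ((x:ℂ) + (T:ℝ)*I) with hHp
      have hAsplit : AA L α T = AA L σ T + (-I) * (Hm - Hp) := by
        have hAα : AA L α T = ∫ t in (-T)..T, f ((α:ℂ) + (t:ℝ)*I) := rfl
        have hAσ : AA L σ T = ∫ t in (-T)..T, f ((σ:ℂ) + (t:ℝ)*I) := rfl
        simp only [smul_eq_mul] at rect
        have h3 : I * AA L α T = (Hm - Hp) + I * AA L σ T := by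
          rw [hAα, hAσ]; linear_combination (-1 : ℂ) * rect
        calc AA L α T = -I * (I * AA L α T) := by rw [← mul_assoc]; simp [Complex.I_mul_I]
          _ = -I * ((Hm - Hp) + I * AA L σ T) := by rw [h3]
          _ = AA L σ T + -I * (Hm - Hp) := by
              rw [mul_add, ← mul_assoc]; simp [Complex.I_mul_I]; ring
      -- bound on the far vertical integral
      have hvert : ‖AA L σ T‖ ≤ 2*T*Real.exp (σ*L)/α := by
        have hσ0 : (0:ℝ) < σ := lt_of_lt_of_le hα hσ
        have hb : ∀ t ∈ Set.uIoc (-T) T,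
            ‖Complex.exp (((σ:ℂ) + t*I) * L) / ((σ:ℂ) + t*I)‖ ≤ Real.exp (σ*L)/σ := by
          intro t _
          rw [norm_div]
          have h1 : ‖Complex.exp (((σ:ℂ) + t*I) * L)‖ = Real.exp (σ * L) := by
            rw [Complex.norm_exp]
            congr 1
            simp [add_mul, Complex.mul_re]
          have h2 : σ ≤ ‖(σ:ℂ) + t*I‖ := by
            have hre : ((σ:ℂ) + t*I).re = σ := by simp
            calc σ = |((σ:ℂ) + t*I).re| := by rw [hre, abs_of_pos hσ0]
              _ ≤ ‖(σ:ℂ) + t*I‖ := Complex.abs_re_le_norm _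
              _ = ‖(σ:ℂ) + t*I‖ := rfl
          rw [h1]
          exact div_le_div_of_nonneg_left (by positivity) hσ0 h2
        have := intervalIntegral.norm_integral_le_of_norm_le_const
          (C := Real.exp (σ*L)/σ) (fun t ht => hb t ht)
        rw [show AA L σ T = ∫ t in (-T)..T, Complex.exp (((σ:ℂ) + t*I) * L) / ((σ:ℂ) + t*I) from rfl]
        refine le_trans this ?_
        have : |T - (-T)| = 2*T := by rw [abs_of_pos (by linarith)]; ring
        rw [this]
        rw [div_mul_eq_mul_div, div_le_div_iff₀ hσ0 hα]
        have he : (0:ℝ) < Real.exp (σ*L) := Real.exp_pos _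
        nlinarith [mul_le_mul_of_nonneg_left hσ (le_of_lt (by positivity : (0:ℝ) < Real.exp (σ*L) * (2*T)))]
      -- bound on horizontal integrals
      have hhor : ∀ y : ℝ, |y| = T →
          ‖∫ x in α..σ, f ((x:ℂ) + y*I)‖ ≤ Real.exp (α*L) / (-L*T) := by
        intro y hy
        have hy0 : y ≠ 0 := by intro h; rw [h] at hy; simp at hy; linarith
        refine le_trans (horiz_bound L α σ y hσ hy0) ?_
        rw [intervalIntegral.integral_div, integral_exp_mul L α σ hL', hy]
        have h1 : |((Real.exp (σ*L) - Real.exp (α*L)) / L) / T| ≤ Real.exp (α*L) / (-L*T) := by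
          have hle : Real.exp (σ*L) ≤ Real.exp (α*L) := by
            apply Real.exp_le_exp.2
            nlinarith [mul_nonneg (sub_nonneg.2 hσ) (le_of_lt (neg_pos.2 hL))]
          have hLT : (0:ℝ) < -L * T := mul_pos (by linarith) hT
          rw [abs_div, abs_div, abs_of_pos hT, abs_of_neg hL, div_div,
            div_le_div_iff₀ hLT hLT, abs_of_nonpos (by linarith)]
          nlinarith [Real.exp_pos (σ*L), hLT]
        exact h1
      have hm := hhor (-T) (by rw [abs_neg]; exact abs_of_pos hT)
      have hp := hhor T (abs_of_pos hT)
      rw [← hHm] at hm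
      rw [← hHp] at hp
      calc ‖AA L α T‖ ≤ ‖AA L σ T‖ + ‖(-I) * (Hm - Hp)‖ := by
            rw [hAsplit]; exact norm_add_le _ _
        _ ≤ ‖AA L σ T‖ + (‖Hm‖ + ‖Hp‖) := by
            rw [norm_mul, norm_neg, Complex.norm_I, one_mul]
            exact add_le_add le_rfl (norm_sub_le _ _)
        _ ≤ 2*T*Real.exp (σ*L)/α + (Real.exp (α*L) / (-L*T) + Real.exp (α*L) / (-L*T)) := by
            gcongr <;> first | exact hvert | exact hm | exact hp
        _ = 2*T*Real.exp (σ*L)/α + 2 * Real.exp (α*L) / (-L * T) := by ring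
    -- let σ → ∞
    have hlim : Tendsto (fun σ : ℝ => 2*T*Real.exp (σ*L)/α + 2 * Real.exp (α*L) / (-L * T))
        atTop (𝓝 (0 + 2 * Real.exp (α*L) / (-L * T))) := by
      apply Tendsto.add _ tendsto_const_nhds
      have h1 : Tendsto (fun σ : ℝ => σ * L) atTop atBot :=
        Tendsto.atTop_mul_const_of_neg hL tendsto_id
      have h2 : Tendsto (fun σ : ℝ => Real.exp (σ * L)) atTop (𝓝 0) :=
        Real.tendsto_exp_atBot.comp h1
      have := (h2.const_mul (2*T)).div_const α
      simpa using this
    have := ge_of_tendsto hlim (eventually_atTop.2 ⟨α, key⟩)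
    simpa using this
  -- squeeze
  have hC : Tendsto (fun T : ℝ => 2 * Real.exp (α*L) / (-L * T)) atTop (𝓝 0) := by
    apply Tendsto.div_atTop (tendsto_const_nhds)
    exact Tendsto.const_mul_atTop (by linarith) tendsto_id
  apply squeeze_zero_norm' _ hC
  filter_upwards [eventually_gt_atTop 0] with T hT
  exact bound T hT

lemma cont_inv {x : ℝ} (hx : x ≠ 0) :
    Continuous fun t : ℝ => 1 / ((x:ℂ) + t*I) := by
  apply Continuous.div continuous_const (by continuity) (fun t => ne_zero_of_re_ne hx t)

lemma integral_x_div (x T : ℝ) (hx : x ≠ 0) :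
    ∫ t in (-T)..T, x / (x^2 + t^2) = 2 * Real.arctan (T / x) := by
  have key : ∀ t : ℝ, HasDerivAt (fun t : ℝ => Real.arctan (t / x)) (x / (x^2 + t^2)) t := by
    intro t
    have h1 : HasDerivAt (fun t : ℝ => t / x) (1 / x) t := by
      simpa using (hasDerivAt_id t).div_const x
    have := (Real.hasDerivAt_arctan (t / x)).comp t h1
    refine this.congr_deriv ?_
    have hx2 : x^2 + t^2 ≠ 0 := by positivity
    field_simp
  have hcont : Continuous fun t : ℝ => x / (x^2 + t^2) := by
    apply Continuous.div continuous_const (by continuity)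
    intro t; positivity
  rw [intervalIntegral.integral_eq_sub_of_hasDerivAt (fun t _ => key t)
    (hcont.intervalIntegrable _ _)]
  rw [neg_div, Real.arctan_neg]
  ring

lemma integral_t_div (x T : ℝ) (hx : x ≠ 0) :
    ∫ t in (-T)..T, t / (x^2 + t^2) = 0 := by
  have key : ∀ t : ℝ, HasDerivAt (fun t : ℝ => Real.log (x^2 + t^2) / 2) (t / (x^2 + t^2)) t := by
    intro t
    have hx2 : x^2 + t^2 ≠ 0 := by positivity
    have h1 : HasDerivAt (fun t : ℝ => x^2 + t^2) (2 * t) t := by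
      simpa using ((hasDerivAt_pow 2 t).const_add (x^2))
    have := ((Real.hasDerivAt_log hx2).comp t h1).div_const 2
    refine this.congr_deriv ?_
    field_simp
  have hcont : Continuous fun t : ℝ => t / (x^2 + t^2) := by
    apply Continuous.div continuous_id (by continuity)
    intro t; positivity
  rw [intervalIntegral.integral_eq_sub_of_hasDerivAt (fun t _ => key t)
    (hcont.intervalIntegrable _ _)]
  simp [neg_pow]

lemma integral_inv_line (x T : ℝ) (hx : x ≠ 0) :
    ∫ t in (-T)..T, 1 / ((x:ℂ) + t*I) = 2 * Real.arctan (T / x) := by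
  have hpt : ∀ t : ℝ, 1 / ((x:ℂ) + t*I)
      = ((x / (x^2 + t^2) : ℝ) : ℂ) - ((t / (x^2 + t^2) : ℝ) : ℂ) * I := by
    intro t
    have h0 : (x:ℂ) + t * I ≠ 0 := ne_zero_of_re_ne hx t
    have hx2 : (x:ℝ)^2 + t^2 ≠ 0 := by positivity
    have hx2' : ((x:ℂ))^2 + (t:ℂ)^2 ≠ 0 := by exact_mod_cast (Complex.ofReal_ne_zero.2 hx2)
    push_cast
    field_simp
    ring_nf
    rw [Complex.I_sq]
    ring
  rw [intervalIntegral.integral_congr (fun t _ => hpt t)]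
  have i1 : IntervalIntegrable (fun t : ℝ => ((x / (x^2 + t^2) : ℝ) : ℂ)) MeasureTheory.volume (-T) T := by
    apply Continuous.intervalIntegrable
    apply Complex.continuous_ofReal.comp
    apply Continuous.div continuous_const (by continuity)
    intro t; positivity
  have i2 : IntervalIntegrable (fun t : ℝ => ((t / (x^2 + t^2) : ℝ) : ℂ) * I) MeasureTheory.volume (-T) T := by
    apply Continuous.intervalIntegrable
    apply Continuous.mul _ continuous_const
    apply Complex.continuous_ofReal.comp
    apply Continuous.div continuous_id (by continuity)
    intro t; positivity
  rw [intervalIntegral.integral_sub i1 i2, intervalIntegral.integral_mul_const,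
    intervalIntegral.integral_ofReal, intervalIntegral.integral_ofReal,
    integral_x_div x T hx, integral_t_div x T hx]
  simp


lemma ne_zero_of_im_ne {y : ℝ} (hy : y ≠ 0) (x : ℝ) : (x : ℂ) + y * I ≠ 0 := by
  intro h; apply hy; simpa using congrArg Complex.im h

lemma AA_tendsto_two_pi (L : ℝ) (hLpos : 0 < L) (α : ℝ) (hα : 0 < α) :
    Tendsto (fun T => AA L α T) atTop (𝓝 (2 * (Real.pi : ℂ))) := by
  have hα' : (α:ℝ) ≠ 0 := ne_of_gt hα
  set g : ℂ → ℂ := dslope (fun s => Complex.exp (s * L)) 0 with hg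
  have hgdiff : Differentiable ℂ g := by
    rw [← differentiableOn_univ]
    exact (Complex.differentiableOn_dslope Filter.univ_mem).2
      ((Complex.differentiable_exp.comp (differentiable_id.mul_const (L:ℂ))).differentiableOn)
  have hgval : ∀ s : ℂ, s ≠ 0 → g s = (Complex.exp (s * L) - 1) / s := by
    intro s hs
    rw [hg, dslope_of_ne _ hs, slope_def_field]
    simp
  have hsplit : ∀ x : ℝ, x ≠ 0 → ∀ T : ℝ,
      (∫ t in (-T)..T, g ((x:ℂ) + t*I)) = AA L x T - 2 * Real.arctan (T/x) := by
    intro x hx T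
    have hpt : ∀ t : ℝ, g ((x:ℂ) + t*I)
        = Complex.exp (((x:ℂ)+t*I)*L)/((x:ℂ)+t*I) - 1/((x:ℂ)+t*I) := by
      intro t
      rw [hgval _ (ne_zero_of_re_ne hx t), sub_div]
    rw [intervalIntegral.integral_congr (fun t _ => hpt t),
      intervalIntegral.integral_sub ((contAA hx).intervalIntegrable _ _)
        ((cont_inv hx).intervalIntegrable _ _),
      integral_inv_line x T hx]
    rfl
  have hneg : ∀ T : ℝ, AA L (-α) T = - AA (-L) α T := by
    intro T
    have h1 : ∀ t : ℝ, Complex.exp ((((-α:ℝ):ℂ) + t*I) * L) / (((-α:ℝ):ℂ) + t*I)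
        = - (Complex.exp (((α:ℂ) + (-t)*I) * ((-L:ℝ):ℂ)) / ((α:ℂ) + (-t)*I)) := by
      intro t
      have h2 : (((-α:ℝ):ℂ) + t*I) = -((α:ℂ) + (-t)*I) := by push_cast; ring
      have h3 : (-((α:ℂ) + (-t)*I)) * (L:ℂ) = ((α:ℂ) + (-t)*I) * ((-L:ℝ):ℂ) := by
        push_cast; ring
      rw [h2, h3, div_neg]
    calc AA L (-α) T
        = ∫ t in (-T)..T, - (Complex.exp (((α:ℂ) + (-t)*I) * ((-L:ℝ):ℂ)) / ((α:ℂ) + (-t)*I)) :=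
          intervalIntegral.integral_congr (fun t _ => h1 t)
      _ = - ∫ t in (-T)..T, Complex.exp (((α:ℂ) + (-t)*I) * ((-L:ℝ):ℂ)) / ((α:ℂ) + (-t)*I) :=
          intervalIntegral.integral_neg
      _ = - AA (-L) α T := by
          simp only [← Complex.ofReal_neg]
          rw [intervalIntegral.integral_comp_neg
            (fun t : ℝ => Complex.exp (((α:ℂ) + t*I) * ((-L:ℝ):ℂ)) / ((α:ℂ) + t*I))]
          rw [neg_neg]
          rfl
  -- main identity for T > 0
  have main : ∀ T : ℝ, 0 < T →
      AA L α T = - AA (-L) α T + ((4 * Real.arctan (T/α) : ℝ) : ℂ)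
        + (-I) * ((∫ x in (-α)..α, g ((x:ℂ) + ((T:ℝ):ℂ)*I)) - (∫ x in (-α)..α, g ((x:ℂ) + ((-T:ℝ):ℂ)*I))) := by
    intro T hT
    have rect : (∫ x in (-α)..α, g ((x:ℂ) + ((-T:ℝ):ℂ)*I)) - (∫ x in (-α)..α, g ((x:ℂ) + ((T:ℝ):ℂ)*I))
        + I • (∫ t in (-T)..T, g ((α:ℂ) + (t:ℝ)*I)) - I • (∫ t in (-T)..T, g (((-α:ℝ):ℂ) + (t:ℝ)*I)) = 0 := by
      have h := Complex.integral_boundary_rect_eq_zero_of_differentiableOn g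
        (⟨-α, -T⟩ : ℂ) (⟨α, T⟩ : ℂ) hgdiff.differentiableOn
      push_cast at h ⊢
      convert h using 4
    set Hm : ℂ := ∫ x in (-α)..α, g ((x:ℂ) + ((-T:ℝ):ℂ)*I) with hHm
    set Hp : ℂ := ∫ x in (-α)..α, g ((x:ℂ) + ((T:ℝ):ℂ)*I) with hHp
    set Vp : ℂ := ∫ t in (-T)..T, g ((α:ℂ) + (t:ℝ)*I) with hVp
    set Vm : ℂ := ∫ t in (-T)..T, g (((-α:ℝ):ℂ) + (t:ℝ)*I) with hVm
    simp only [smul_eq_mul] at rect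
    have h3 : I * Vp = (Hp - Hm) + I * Vm := by linear_combination rect
    have h4 : Vp = Vm + (-I) * (Hp - Hm) := by
      calc Vp = -I * (I * Vp) := by rw [← mul_assoc]; simp [Complex.I_mul_I]
        _ = -I * ((Hp - Hm) + I * Vm) := by rw [h3]
        _ = Vm + -I * (Hp - Hm) := by
            rw [mul_add, ← mul_assoc]; simp [Complex.I_mul_I]; ring
    have e1 : Vp = AA L α T - 2 * Real.arctan (T/α) := hsplit α hα' T
    have e2 : Vm = AA L (-α) T - 2 * Real.arctan (T/(-α)) := hsplit (-α) (by simpa using hα') T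
    rw [e1, e2, hneg T] at h4
    have e3 : Real.arctan (T/(-α)) = - Real.arctan (T/α) := by
      rw [div_neg, Real.arctan_neg]
    rw [e3] at h4
    push_cast at h4 ⊢
    linear_combination h4
  -- horizontal integrals tend to zero
  have hhor : ∀ T : ℝ, 0 < T → ∀ y : ℝ, |y| = T →
      ‖∫ x in (-α)..α, g ((x:ℂ) + (y:ℂ)*I)‖ ≤ (Real.exp (α*L) + 1)/T * (2*α) := by
    intro T hT y hy
    have hy0 : y ≠ 0 := by intro h; rw [h] at hy; simp at hy; linarith
    have hb : ∀ x ∈ Set.uIoc (-α) α, ‖g ((x:ℂ) + (y:ℂ)*I)‖ ≤ (Real.exp (α*L) + 1)/T := by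
      intro x hx
      have hxmem : x ∈ Set.Icc (-α) α := by
        rw [Set.uIoc_of_le (by linarith : -α ≤ α)] at hx
        exact ⟨le_of_lt hx.1, hx.2⟩
      have hs0 : ((x:ℂ) + (y:ℂ)*I) ≠ 0 := ne_zero_of_im_ne hy0 x
      rw [hgval _ hs0, norm_div]
      have hnum : ‖Complex.exp (((x:ℂ) + (y:ℂ)*I) * L) - 1‖ ≤ Real.exp (α*L) + 1 := by
        refine le_trans (norm_sub_le _ _) ?_
        have : ‖Complex.exp (((x:ℂ) + (y:ℂ)*I) * L)‖ = Real.exp (x * L) := by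
          rw [Complex.norm_exp]
          congr 1
          simp [add_mul, Complex.mul_re]
        rw [this, norm_one]
        have : Real.exp (x*L) ≤ Real.exp (α*L) :=
          Real.exp_le_exp.2 (mul_le_mul_of_nonneg_right hxmem.2 (le_of_lt hLpos))
        linarith
      have hden : T ≤ ‖(x:ℂ) + (y:ℂ)*I‖ := by
        have him : ((x:ℂ) + y*I).im = y := by simp
        calc T = |y| := hy.symm
          _ = |((x:ℂ) + y*I).im| := by rw [him]
          _ ≤ ‖(x:ℂ) + y*I‖ := Complex.abs_im_le_norm _
          _ = ‖(x:ℂ) + y*I‖ := rfl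
      exact div_le_div₀ (by positivity) hnum hT hden
    have := intervalIntegral.norm_integral_le_of_norm_le_const
      (C := (Real.exp (α*L) + 1)/T) hb
    refine le_trans this ?_
    rw [show |α - (-α)| = 2*α from by rw [abs_of_pos (by linarith)]; ring]
  -- assemble limits
  have hlim1 : Tendsto (fun T => - AA (-L) α T) atTop (𝓝 0) := by
    have := AA_tendsto_zero (-L) (by linarith) α hα
    simpa using this.neg
  have hlim2 : Tendsto (fun T : ℝ => ((4 * Real.arctan (T/α) : ℝ) : ℂ)) atTop (𝓝 ((2*Real.pi : ℝ) : ℂ)) := by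
    apply Tendsto.comp (Complex.continuous_ofReal.tendsto _)
    have h1 : Tendsto (fun T : ℝ => T/α) atTop atTop := tendsto_id.atTop_div_const hα
    have h2 : Tendsto (fun T : ℝ => Real.arctan (T/α)) atTop (𝓝 (Real.pi/2)) :=
      (Real.tendsto_arctan_atTop.mono_right nhdsWithin_le_nhds).comp h1
    have := h2.const_mul (4:ℝ)
    convert this using 2
    ring
  have hlim3 : Tendsto (fun T : ℝ => (-I) * ((∫ x in (-α)..α, g ((x:ℂ) + ((T:ℝ):ℂ)*I)) - (∫ x in (-α)..α, g ((x:ℂ) + ((-T:ℝ):ℂ)*I)))) atTop (𝓝 0) := by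
    have hg0 : Tendsto (fun T : ℝ => (2 * ((Real.exp (α*L) + 1) * (2*α)))/T) atTop (𝓝 0) :=
      Tendsto.div_atTop tendsto_const_nhds tendsto_id
    apply squeeze_zero_norm' ?_ hg0
    · filter_upwards [eventually_gt_atTop 0] with T hT
      rw [norm_mul, norm_neg, Complex.norm_I, one_mul]
      calc ‖(∫ x in (-α)..α, g ((x:ℂ) + ((T:ℝ):ℂ)*I)) - (∫ x in (-α)..α, g ((x:ℂ) + ((-T:ℝ):ℂ)*I))‖
          ≤ ‖∫ x in (-α)..α, g ((x:ℂ) + ((T:ℝ):ℂ)*I)‖ + ‖∫ x in (-α)..α, g ((x:ℂ) + ((-T:ℝ):ℂ)*I)‖ :=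
            norm_sub_le _ _
        _ ≤ (Real.exp (α*L) + 1)/T * (2*α) + (Real.exp (α*L) + 1)/T * (2*α) := by
            gcongr <;> first
              | exact hhor T hT T (abs_of_pos hT)
              | exact hhor T hT (-T) (by rw [abs_neg]; exact abs_of_pos hT)
        _ = (2 * ((Real.exp (α*L) + 1) * (2*α)))/T := by ring
  have : Tendsto (fun T => - AA (-L) α T + ((4 * Real.arctan (T/α) : ℝ) : ℂ)
      + (-I) * ((∫ x in (-α)..α, g ((x:ℂ) + ((T:ℝ):ℂ)*I)) - (∫ x in (-α)..α, g ((x:ℂ) + ((-T:ℝ):ℂ)*I))))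
      atTop (𝓝 (0 + ((2*Real.pi : ℝ) : ℂ) + 0)) :=
    (hlim1.add hlim2).add hlim3
  rw [show (0 : ℂ) + ((2*Real.pi : ℝ) : ℂ) + 0 = 2*(Real.pi:ℂ) from by push_cast; ring] at this
  apply Tendsto.congr' ?_ this
  filter_upwards [eventually_gt_atTop 0] with T hT
  exact (main T hT).symm

lemma AA_tendsto_pi (α : ℝ) (hα : 0 < α) :
    Tendsto (fun T => AA 0 α T) atTop (𝓝 ((Real.pi : ℂ))) := by
  have hval : ∀ T : ℝ, AA 0 α T = 2 * (Real.arctan (T/α) : ℂ) := by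
    intro T
    have hpt : ∀ t : ℝ, Complex.exp (((α:ℂ)+t*I)*((0:ℝ):ℂ))/((α:ℂ)+t*I) = 1/((α:ℂ)+t*I) := by
      intro t; simp
    calc AA 0 α T = ∫ t in (-T)..T, 1/((α:ℂ)+t*I) :=
          intervalIntegral.integral_congr (fun t _ => hpt t)
      _ = 2 * Real.arctan (T/α) := integral_inv_line α T (ne_of_gt hα)
  apply Tendsto.congr (fun T => (hval T).symm)
  have h1 : Tendsto (fun T : ℝ => T/α) atTop atTop := tendsto_id.atTop_div_const hα
  have h2 : Tendsto (fun T : ℝ => Real.arctan (T/α)) atTop (𝓝 (Real.pi/2)) :=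
    (Real.tendsto_arctan_atTop.mono_right nhdsWithin_le_nhds).comp h1
  have h3 : Tendsto (fun T : ℝ => ((Real.arctan (T/α) : ℝ) : ℂ)) atTop (𝓝 ((Real.pi/2 : ℝ) : ℂ)) :=
    (Complex.continuous_ofReal.tendsto _).comp h2
  have := h3.const_mul (2:ℂ)
  convert this using 2
  push_cast
  ring

/-- The Mellin/Perron identity: for `b, α > 0`,
`lim_{T→∞} (1/2πi) ∫_{α-iT}^{α+iT} bˢ ds/s` equals `1` if `b > 1`, `1/2` if `b = 1`,
and `0` if `b < 1`. -/
theorem stmt9 (b α : ℝ) (hb : 0 < b) (hα : 0 < α) :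
    Filter.Tendsto (fun T : ℝ =>
      (1 / (2 * Real.pi * Complex.I)) *
        ∫ t in (-T)..T,
          Complex.exp (((α : ℂ) + t * Complex.I) * (Real.log b : ℂ))
            / ((α : ℂ) + t * Complex.I) * Complex.I)
      Filter.atTop
      (nhds (if 1 < b then 1 else if b = 1 then 1 / 2 else 0)) := by
  set L := Real.log b with hLdef
  set v : ℂ := if 1 < b then 1 else if b = 1 then 1 / 2 else 0 with hv
  have hint : ∀ T : ℝ, (∫ t in (-T)..T,
      Complex.exp (((α : ℂ) + t * Complex.I) * (Real.log b : ℂ))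
        / ((α : ℂ) + t * Complex.I) * Complex.I) = AA L α T * Complex.I := by
    intro T; rw [intervalIntegral.integral_mul_const]; rfl
  have key : Tendsto (fun T => AA L α T) atTop (𝓝 (2 * (Real.pi : ℂ) * v)) := by
    rcases lt_trichotomy b 1 with h|h|h
    · rw [hv, if_neg (by linarith), if_neg (ne_of_lt h), mul_zero]
      exact AA_tendsto_zero L (Real.log_neg hb h) α hα
    · rw [hv, if_neg (by rw [h]; exact lt_irrefl 1), if_pos h]
      have hL0 : L = 0 := by rw [hLdef, h, Real.log_one]
      rw [hL0]
      have := AA_tendsto_pi α hα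
      convert this using 2
      push_cast
      ring
    · rw [hv, if_pos h, mul_one]
      exact AA_tendsto_two_pi L (Real.log_pos h) α hα
  have final := (key.mul_const Complex.I).const_mul (1 / (2 * (Real.pi : ℂ) * Complex.I))
  have hne : (2 * (Real.pi:ℂ) * Complex.I) ≠ 0 := by
    apply mul_ne_zero (mul_ne_zero two_ne_zero _) Complex.I_ne_zero
    exact_mod_cast Real.pi_ne_zero
  have hval2 : (1 / (2 * (Real.pi:ℂ) * Complex.I)) * ((2 * (Real.pi:ℂ) * v) * Complex.I) = v := by
    field_simp
  rw [hval2] at final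
  apply Tendsto.congr ?_ final
  intro T
  rw [hint T]
end

section
/- Let $P$ be a squarefree positive integer whose prime factors are all at most $y$, and let $f$ be a multiplicative function with $0 \le f(p) \le 1/p$ for all primes $p$. Let $x \ge y \ge 2$, $\beta := \log x / \log y$, and $\theta \in (0,1)$. Then $\sum_{\substack{k_1 k_2 \mid P,\ (k_1,k_2)=1 \\ k_1 k_2 > x^{\theta/2}}} f(k_1) f(k_2) \prod_{p \mid P/(k_1 k_2)}(1 - 2f(p)) \ll e^{-\frac{\theta}{6} \beta \log \beta}$, provided $\beta$ is sufficiently large, with implied constant depending only on $\theta$. -/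
open Finset

lemma sum_Icc_rpow_le (σ : ℝ) (hσ0 : 0 < σ) (hσ1 : σ ≤ 1) :
    ∀ N : ℕ, ∑ m ∈ Finset.Icc 1 N, (m:ℝ) ^ (σ-1) ≤ (N:ℝ) ^ σ / σ := by
  intro N
  induction N with
  | zero => simp [Real.zero_rpow hσ0.ne']
  | succ N ih =>
    rw [Finset.sum_Icc_succ_top (by omega)]
    have ha : (0:ℝ) < (N:ℝ) + 1 := by positivity
    have key : ((N:ℝ))^σ + σ * ((N:ℝ)+1)^(σ-1) ≤ ((N:ℝ)+1)^σ := by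
      have hs : -1 ≤ -(1/((N:ℝ)+1)) := by
        rw [neg_le_neg_iff]
        rw [div_le_one ha]
        linarith [Nat.cast_nonneg (α := ℝ) N]
      have hber : (1 + (-(1/((N:ℝ)+1))))^σ ≤ 1 + σ * (-(1/((N:ℝ)+1))) :=
        rpow_one_add_le_one_add_mul_self hs hσ0.le hσ1
      have hb : (N:ℝ) = ((N:ℝ)+1) * (1 + (-(1/((N:ℝ)+1)))) := by field_simp; ring
      have h1 : ((N:ℝ))^σ = ((N:ℝ)+1)^σ * (1 + (-(1/((N:ℝ)+1))))^σ := by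
        conv_lhs => rw [hb]
        rw [Real.mul_rpow ha.le (by nlinarith)]
      have h2 : ((N:ℝ)+1)^(σ-1) = ((N:ℝ)+1)^σ / ((N:ℝ)+1) := by
        rw [Real.rpow_sub ha, Real.rpow_one]
      have h3 : (0:ℝ) < ((N:ℝ)+1)^σ := Real.rpow_pos_of_pos ha σ
      calc ((N:ℝ))^σ + σ * ((N:ℝ)+1)^(σ-1)
          ≤ ((N:ℝ)+1)^σ * (1 + σ * (-(1/((N:ℝ)+1)))) + σ * (((N:ℝ)+1)^σ / ((N:ℝ)+1)) := by
            rw [h1, h2]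
            have := mul_le_mul_of_nonneg_left hber h3.le
            linarith
        _ = ((N:ℝ)+1)^σ := by field_simp; ring
    have : ((N:ℝ)+1)^(σ-1) ≤ (((N:ℝ)+1)^σ - (N:ℝ)^σ)/σ := by
      rw [le_div_iff₀ hσ0]
      linarith
    push_cast
    calc ∑ m ∈ Finset.Icc 1 N, (m:ℝ) ^ (σ-1) + ((N:ℝ)+1)^(σ-1)
        ≤ (N:ℝ)^σ/σ + (((N:ℝ)+1)^σ - (N:ℝ)^σ)/σ := by linarith
      _ = ((N:ℝ)+1)^σ/σ := by ring

lemma theta_le (n : ℕ) :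
    ∑ p ∈ (range (n+1)).filter Nat.Prime, Real.log p ≤ n * Real.log 4 := by
  have h0 : ∀ p ∈ (range (n+1)).filter Nat.Prime, ((p:ℝ)) ≠ 0 := by
    intro p hp
    have := (Finset.mem_filter.mp hp).2
    exact_mod_cast this.pos.ne'
  have h1 : ∑ p ∈ (range (n+1)).filter Nat.Prime, Real.log p
      = Real.log (∏ p ∈ (range (n+1)).filter Nat.Prime, (p:ℝ)) :=
    (Real.log_prod h0).symm
  rw [h1]
  have h2 : ∏ p ∈ (range (n+1)).filter Nat.Prime, (p:ℝ) = ((primorial n : ℕ) : ℝ) := by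
    rw [primorial]; push_cast; rfl
  rw [h2]
  have h3 : ((primorial n : ℕ) : ℝ) ≤ ((4:ℝ))^n := by
    exact_mod_cast primorial_le_4_pow n
  have h4 : (0:ℝ) < ((primorial n : ℕ) : ℝ) := by exact_mod_cast primorial_pos n
  calc Real.log ((primorial n : ℕ) : ℝ) ≤ Real.log ((4:ℝ)^n) := Real.log_le_log h4 h3
    _ = n * Real.log 4 := by rw [Real.log_pow]

lemma abel_id (a c : ℕ → ℝ) (N : ℕ) :
    ∑ n ∈ range (N+1), a n * c n
      = (∑ n ∈ range (N+1), a n) * c (N+1)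
        + ∑ m ∈ range (N+1), ((c m - c (m+1)) * ∑ n ∈ range (m+1), a n) := by
  have tele : ∀ n ∈ range (N+1), c n = c (N+1) + ∑ m ∈ Ico n (N+1), (c m - c (m+1)) := by
    intro n hn
    have hn' : n ≤ N + 1 := by simp only [mem_range] at hn; omega
    rw [Finset.sum_Ico_eq_sub _ hn']
    rw [Finset.sum_range_sub' c, Finset.sum_range_sub' c]
    ring
  calc ∑ n ∈ range (N+1), a n * c n
      = ∑ n ∈ range (N+1), (a n * c (N+1) + ∑ m ∈ Ico n (N+1), a n * (c m - c (m+1))) := by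
        refine Finset.sum_congr rfl fun n hn => ?_
        rw [← Finset.mul_sum, ← mul_add, ← tele n hn]
    _ = (∑ n ∈ range (N+1), a n) * c (N+1)
        + ∑ n ∈ range (N+1), ∑ m ∈ Ico n (N+1), a n * (c m - c (m+1)) := by
        rw [Finset.sum_add_distrib, Finset.sum_mul]
    _ = (∑ n ∈ range (N+1), a n) * c (N+1)
        + ∑ m ∈ range (N+1), ((c m - c (m+1)) * ∑ n ∈ range (m+1), a n) := by
        congr 1
        have hiff : ∀ (x y : ℕ), x ∈ range (N+1) ∧ y ∈ Ico x (N+1)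
            ↔ x ∈ range (y+1) ∧ y ∈ range (N+1) := by
          intro x y; simp only [mem_range, mem_Ico]; omega
        rw [Finset.sum_comm' hiff]
        refine Finset.sum_congr rfl fun m hm => ?_
        rw [Finset.mul_sum]
        refine Finset.sum_congr rfl fun n hn => ?_
        ring

lemma cheb (σ : ℝ) (hσ : 0 < σ) (N : ℕ) (y : ℝ) (hy2 : 2 ≤ y) (hNy : (N:ℝ) ≤ y) :
    ∑ p ∈ (range (N+1)).filter Nat.Prime, ((p:ℝ)^σ - 1)/p ≤ 12 * y ^ σ := by
  have hy0 : (0:ℝ) < y := by linarith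
  have hyσ : (0:ℝ) < y ^ σ := Real.rpow_pos_of_pos hy0 σ
  rcases le_or_gt 1 σ with hσ1 | hσ1
  · -- easy case σ ≥ 1
    have hterm : ∀ p ∈ (range (N+1)).filter Nat.Prime, ((p:ℝ)^σ - 1)/p ≤ y^(σ-1) := by
      intro p hp
      rw [Finset.mem_filter, Finset.mem_range] at hp
      obtain ⟨hpr, hpp⟩ := hp
      have hp2 : (2:ℝ) ≤ (p:ℝ) := by exact_mod_cast hpp.two_le
      have hp0 : (0:ℝ) < (p:ℝ) := by linarith
      have hpy : (p:ℝ) ≤ y := by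
        have : (p:ℝ) ≤ (N:ℝ) := by exact_mod_cast Nat.lt_succ_iff.mp hpr
        linarith
      calc ((p:ℝ)^σ - 1)/p ≤ (p:ℝ)^σ/p := by
            gcongr
            linarith
        _ = (p:ℝ)^(σ-1) := by rw [Real.rpow_sub hp0, Real.rpow_one]
        _ ≤ y^(σ-1) := Real.rpow_le_rpow hp0.le hpy (by linarith)
    have hcard : ((range (N+1)).filter Nat.Prime).card ≤ N := by
      have hsub : (range (N+1)).filter Nat.Prime ⊆ Finset.Ioo 0 (N+1) := by
        intro p hp
        rw [Finset.mem_filter, Finset.mem_range] at hp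
        rw [Finset.mem_Ioo]
        exact ⟨hp.2.pos, hp.1⟩
      calc ((range (N+1)).filter Nat.Prime).card ≤ (Finset.Ioo 0 (N+1)).card :=
            Finset.card_le_card hsub
        _ = N := by rw [Nat.card_Ioo]; omega
    have h1 : ∑ p ∈ (range (N+1)).filter Nat.Prime, ((p:ℝ)^σ - 1)/p
        ≤ ((range (N+1)).filter Nat.Prime).card • y^(σ-1) :=
      Finset.sum_le_card_nsmul _ _ _ hterm
    have hy1 : (0:ℝ) ≤ y^(σ-1) := Real.rpow_nonneg hy0.le _
    calc ∑ p ∈ (range (N+1)).filter Nat.Prime, ((p:ℝ)^σ - 1)/p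
        ≤ ((range (N+1)).filter Nat.Prime).card • y^(σ-1) := h1
      _ = (((range (N+1)).filter Nat.Prime).card : ℝ) * y^(σ-1) := by
          rw [nsmul_eq_mul]
      _ ≤ (N:ℝ) * y^(σ-1) := by
          apply mul_le_mul_of_nonneg_right _ hy1
          exact_mod_cast hcard
      _ ≤ y * y^(σ-1) := mul_le_mul_of_nonneg_right hNy hy1
      _ = y^σ := by
          rw [← Real.rpow_one_add' hy0.le (by linarith : (1:ℝ) + (σ-1) ≠ 0)]
          ring_nf
      _ ≤ 12 * y^σ := by linarith
  · -- main case σ < 1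
    set a : ℕ → ℝ := fun n => if n.Prime then Real.log n else 0 with ha
    set c : ℕ → ℝ := fun m => (m:ℝ)^(σ-1) with hc
    have hc0 : ∀ m : ℕ, 0 ≤ c m := fun m => Real.rpow_nonneg (Nat.cast_nonneg m) _
    have hθ : ∀ m : ℕ, ∑ n ∈ range (m+1), a n ≤ m * Real.log 4 := by
      intro m
      have : ∑ n ∈ range (m+1), a n = ∑ p ∈ (range (m+1)).filter Nat.Prime, Real.log p := by
        rw [Finset.sum_filter]
      rw [this]; exact theta_le m
    have hθ0 : ∀ m : ℕ, 0 ≤ ∑ n ∈ range (m+1), a n := by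
      intro m
      apply Finset.sum_nonneg
      intro n _
      simp only [ha]
      split
      · rename_i hn
        exact Real.log_natCast_nonneg n
      · exact le_refl _
    have hlog4 : (0:ℝ) ≤ Real.log 4 := Real.log_nonneg (by norm_num)
    have hlog4' : Real.log 4 ≤ 3 := by
      have := Real.log_le_sub_one_of_pos (by norm_num : (0:ℝ) < 4)
      linarith
    have hNσ : (0:ℝ) ≤ ((N:ℝ)+1)^σ := Real.rpow_nonneg (by positivity) _
    -- Step A : bound each term by σ * log p * p^(σ-1)
    have hA : ∑ p ∈ (range (N+1)).filter Nat.Prime, ((p:ℝ)^σ - 1)/p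
        ≤ σ * ∑ n ∈ range (N+1), a n * c n := by
      have hrw : ∑ n ∈ range (N+1), a n * c n
          = ∑ p ∈ (range (N+1)).filter Nat.Prime, Real.log p * c p := by
        rw [Finset.sum_filter]
        refine Finset.sum_congr rfl fun n _ => ?_
        simp only [ha]
        split <;> simp
      rw [hrw, Finset.mul_sum]
      refine Finset.sum_le_sum fun p hp => ?_
      rw [Finset.mem_filter, Finset.mem_range] at hp
      have hp2 : (2:ℝ) ≤ (p:ℝ) := by exact_mod_cast hp.2.two_le
      have hp0 : (0:ℝ) < (p:ℝ) := by linarith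
      have hlog : 0 ≤ Real.log p := Real.log_nonneg (by linarith)
      have ht0 : 0 ≤ Real.log p * σ := mul_nonneg hlog hσ.le
      have hexp : (p:ℝ)^σ = Real.exp (Real.log p * σ) := Real.rpow_def_of_pos hp0 σ
      have h1 : Real.exp (Real.log p * σ) - 1
          ≤ (Real.log p * σ) * Real.exp (Real.log p * σ) := by
        have h2 := Real.add_one_le_exp (-(Real.log p * σ))
        have h3 := Real.exp_pos (Real.log p * σ)
        have h4 : Real.exp (-(Real.log p * σ)) * Real.exp (Real.log p * σ) = 1 := by
          rw [← Real.exp_add]; simp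
        nlinarith
      have hnum : (p:ℝ)^σ - 1 ≤ (Real.log p * σ) * (p:ℝ)^σ := by
        rw [hexp]; linarith
      have hcp : c p = (p:ℝ)^σ/p := by
        rw [hc]; dsimp only; rw [Real.rpow_sub hp0, Real.rpow_one]
      calc ((p:ℝ)^σ - 1)/p ≤ ((Real.log p * σ) * (p:ℝ)^σ)/p := by gcongr
        _ = σ * (Real.log p * c p) := by rw [hcp]; ring
    -- Step B : Abel summation bound
    have habel := abel_id a c N
    have hcN1 : c (N+1) = ((N:ℝ)+1)^(σ-1) := by rw [hc]; push_cast; ring_nf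
    have hterm1 : (∑ n ∈ range (N+1), a n) * c (N+1) ≤ Real.log 4 * ((N:ℝ)+1)^σ := by
      have h1 : (∑ n ∈ range (N+1), a n) * c (N+1) ≤ ((N:ℝ) * Real.log 4) * c (N+1) :=
        mul_le_mul_of_nonneg_right (hθ N) (hc0 _)
      have h2 : ((N:ℝ)) * c (N+1) ≤ ((N:ℝ)+1)^σ := by
        rw [hcN1]
        calc (N:ℝ) * ((N:ℝ)+1)^(σ-1) ≤ ((N:ℝ)+1) * ((N:ℝ)+1)^(σ-1) := by
              apply mul_le_mul_of_nonneg_right (by linarith)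
                (Real.rpow_nonneg (by positivity) _)
          _ = ((N:ℝ)+1)^σ := by
              rw [← Real.rpow_one_add' (by positivity) (by linarith : (1:ℝ) + (σ-1) ≠ 0)]
              ring_nf
      calc (∑ n ∈ range (N+1), a n) * c (N+1) ≤ ((N:ℝ) * Real.log 4) * c (N+1) := h1
        _ = Real.log 4 * ((N:ℝ) * c (N+1)) := by ring
        _ ≤ Real.log 4 * ((N:ℝ)+1)^σ := mul_le_mul_of_nonneg_left h2 hlog4
    have hterm2 : ∑ m ∈ range (N+1), ((c m - c (m+1)) * ∑ n ∈ range (m+1), a n)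
        ≤ Real.log 4 * (((N:ℝ)+1)^σ/σ) := by
      have hper : ∀ m ∈ range (N+1), ((c m - c (m+1)) * ∑ n ∈ range (m+1), a n)
          ≤ Real.log 4 * ((m:ℝ) * (c m - c (m+1))) := by
        intro m _
        rcases Nat.eq_zero_or_pos m with rfl | hm
        · simp [ha, Nat.not_prime_zero]
        · have hd : 0 ≤ c m - c (m+1) := by
            have hmono : c (m+1) ≤ c m := by
              rw [hc]; dsimp only
              apply Real.rpow_le_rpow_of_nonpos
                (by exact_mod_cast hm) (by push_cast; linarith) (by linarith)
            linarith
          calc (c m - c (m+1)) * ∑ n ∈ range (m+1), a n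
              ≤ (c m - c (m+1)) * ((m:ℝ) * Real.log 4) :=
                mul_le_mul_of_nonneg_left (hθ m) hd
            _ = Real.log 4 * ((m:ℝ) * (c m - c (m+1))) := by ring
      have htel : ∑ m ∈ range (N+1), (m:ℝ)*(c m - c (m+1)) ≤ ((N:ℝ)+1)^σ/σ := by
        have hsplit : ∀ m ∈ range (N+1), (m:ℝ)*(c m - c (m+1))
            = ((fun k : ℕ => (k:ℝ)*c k) m - (fun k : ℕ => (k:ℝ)*c k) (m+1)) + c (m+1) := by
          intro m _; push_cast; ring
        rw [Finset.sum_congr rfl hsplit, Finset.sum_add_distrib, Finset.sum_range_sub']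
        have hre : ∑ m ∈ range (N+1), c (m+1) = ∑ m ∈ Finset.Icc 1 (N+1), c m := by
          rw [← Finset.Ico_add_one_right_eq_Icc, Finset.sum_Ico_eq_sum_range]
          refine Finset.sum_congr (by congr 1) fun m _ => ?_
          rw [add_comm]
        have hIcc' : ∑ m ∈ Finset.Icc 1 (N+1), c m ≤ ((N:ℝ)+1)^σ/σ := by
          have h9 := sum_Icc_rpow_le σ hσ hσ1.le (N+1)
          push_cast at h9
          simpa [hc] using h9
        rw [hre]
        have hg0 : ((0:ℕ):ℝ) * c 0 = 0 := by simp
        have hgN : (0:ℝ) ≤ ((N+1:ℕ):ℝ) * c (N+1) := mul_nonneg (by positivity) (hc0 _)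
        push_cast at hg0 hgN ⊢
        linarith [hIcc']
      calc ∑ m ∈ range (N+1), ((c m - c (m+1)) * ∑ n ∈ range (m+1), a n)
          ≤ ∑ m ∈ range (N+1), Real.log 4 * ((m:ℝ)*(c m - c (m+1))) :=
            Finset.sum_le_sum hper
        _ = Real.log 4 * ∑ m ∈ range (N+1), (m:ℝ)*(c m - c (m+1)) := by
            rw [Finset.mul_sum]
        _ ≤ Real.log 4 * (((N:ℝ)+1)^σ/σ) := mul_le_mul_of_nonneg_left htel hlog4
    -- combine
    have hcomb : ∑ p ∈ (range (N+1)).filter Nat.Prime, ((p:ℝ)^σ - 1)/p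
        ≤ 6 * ((N:ℝ)+1)^σ := by
      have h5 : σ * ∑ n ∈ range (N+1), a n * c n
          ≤ σ * (Real.log 4 * ((N:ℝ)+1)^σ) + Real.log 4 * ((N:ℝ)+1)^σ := by
        rw [habel, mul_add]
        have e1 : σ * ((∑ n ∈ range (N+1), a n) * c (N+1))
            ≤ σ * (Real.log 4 * ((N:ℝ)+1)^σ) :=
          mul_le_mul_of_nonneg_left hterm1 hσ.le
        have e2 : σ * ∑ m ∈ range (N+1), ((c m - c (m+1)) * ∑ n ∈ range (m+1), a n)
            ≤ Real.log 4 * ((N:ℝ)+1)^σ := by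
          calc σ * ∑ m ∈ range (N+1), ((c m - c (m+1)) * ∑ n ∈ range (m+1), a n)
              ≤ σ * (Real.log 4 * (((N:ℝ)+1)^σ/σ)) := mul_le_mul_of_nonneg_left hterm2 hσ.le
            _ = Real.log 4 * ((N:ℝ)+1)^σ := by field_simp
        linarith
      have h6 : σ * (Real.log 4 * ((N:ℝ)+1)^σ) ≤ Real.log 4 * ((N:ℝ)+1)^σ := by
        nlinarith [mul_nonneg hlog4 hNσ]
      have h7 : Real.log 4 * ((N:ℝ)+1)^σ ≤ 3 * ((N:ℝ)+1)^σ :=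
        mul_le_mul_of_nonneg_right hlog4' hNσ
      linarith [hA]
    have hfin : ((N:ℝ)+1)^σ ≤ 2 * y^σ := by
      have h8 : ((N:ℝ)+1) ≤ 2*y := by linarith
      calc ((N:ℝ)+1)^σ ≤ (2*y)^σ := Real.rpow_le_rpow (by positivity) h8 hσ.le
        _ = 2^σ * y^σ := Real.mul_rpow (by norm_num) hy0.le
        _ ≤ 2 * y^σ := by
            have : (2:ℝ)^σ ≤ 2^(1:ℝ) := Real.rpow_le_rpow_of_exponent_le (by norm_num) hσ1.le
            rw [Real.rpow_one] at this
            nlinarith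
    linarith

lemma mult_prod (f : ℕ → ℝ) (h1 : f 1 = 1)
    (hm : ∀ m n : ℕ, Nat.Coprime m n → f (m * n) = f m * f n) :
    ∀ s : Finset ℕ, (∀ p ∈ s, p.Prime) → f (∏ p ∈ s, p) = ∏ p ∈ s, f p := by
  intro s
  induction s using Finset.cons_induction with
  | empty => simp [h1]
  | cons p t hp ih =>
    intro hs
    have hps : p.Prime := hs p (Finset.mem_cons_self p t)
    have hts : ∀ q ∈ t, q.Prime := fun q hq => hs q (Finset.mem_cons.mpr (Or.inr hq))
    have hcop : Nat.Coprime p (∏ q ∈ t, q) := by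
      apply Nat.Coprime.prod_right
      intro q hq
      exact (Nat.coprime_primes hps (hts q hq)).mpr (by rintro rfl; exact hp hq)
    rw [Finset.prod_cons, Finset.prod_cons, hm p _ hcop, ih hts]

lemma keyIdentity (P : ℕ) (hP : Squarefree P) (hP0 : 0 < P) (u w : ℕ → ℝ) :
    ∑ k ∈ ((P.divisors ×ˢ P.divisors).filter
        (fun k => k.1 * k.2 ∣ P ∧ Nat.Coprime k.1 k.2)),
      ((∏ p ∈ k.1.primeFactors, u p) * (∏ p ∈ k.2.primeFactors, u p) *
        ∏ p ∈ (P / (k.1 * k.2)).primeFactors, w p)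
    = ∏ p ∈ P.primeFactors, (u p + u p + w p) := by
  classical
  set s := P.primeFactors with hs
  have hsp : ∀ p ∈ s, p.Prime := fun p hp => Nat.prime_of_mem_primeFactors hp
  have hsP : ∏ p ∈ s, p = P := Nat.prod_primeFactors_of_squarefree hP
  -- the subset-pair side
  have step1 : ∑ A ∈ ((s.powerset ×ˢ s.powerset).filter (fun A => Disjoint A.1 A.2)),
      ((∏ p ∈ A.1, u p) * (∏ p ∈ A.2, u p) * ∏ p ∈ s \ (A.1 ∪ A.2), w p)
      = ∏ p ∈ s, (u p + u p + w p) := by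
    rw [show (fun p => u p + u p + w p) = (fun p => u p + (u p + w p)) by funext p; ring]
    rw [Finset.prod_add]
    rw [Finset.sum_filter, Finset.sum_product]
    refine Finset.sum_congr rfl fun A1 hA1 => ?_
    rw [Finset.mem_powerset] at hA1
    rw [Finset.prod_add u w (s \ A1), Finset.mul_sum, ← Finset.sum_filter]
    have hpw : s.powerset.filter (fun A2 => Disjoint A1 A2) = (s \ A1).powerset := by
      ext B
      simp only [Finset.mem_filter, Finset.mem_powerset, Finset.subset_sdiff]
      constructor
      · rintro ⟨h1, h2⟩; exact ⟨h1, h2.symm⟩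
      · rintro ⟨h1, h2⟩; exact ⟨h1, h2.symm⟩
    rw [hpw]
    refine Finset.sum_congr rfl fun A2 hA2 => ?_
    have hsd : s \ (A1 ∪ A2) = (s \ A1) \ A2 := by
      ext x
      simp only [Finset.mem_sdiff, Finset.mem_union]
      tauto
    rw [hsd, mul_assoc]
  rw [← step1]
  refine Finset.sum_nbij' (fun k => (k.1.primeFactors, k.2.primeFactors))
      (fun A => (∏ p ∈ A.1, p, ∏ p ∈ A.2, p)) ?_ ?_ ?_ ?_ ?_
  · -- maps into D
    intro k hk
    rw [Finset.mem_filter, Finset.mem_product] at hk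
    obtain ⟨⟨hk1, hk2⟩, hd, hcop⟩ := hk
    rw [Finset.mem_filter, Finset.mem_product]
    refine ⟨⟨?_, ?_⟩, hcop.disjoint_primeFactors⟩
    · rw [Finset.mem_powerset, hs]
      exact Nat.primeFactors_mono (Nat.mem_divisors.mp hk1).1 hP0.ne'
    · rw [Finset.mem_powerset, hs]
      exact Nat.primeFactors_mono (Nat.mem_divisors.mp hk2).1 hP0.ne'
  · -- maps back
    intro A hA
    rw [Finset.mem_filter, Finset.mem_product, Finset.mem_powerset, Finset.mem_powerset] at hA
    obtain ⟨⟨hA1, hA2⟩, hdisj⟩ := hA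
    rw [Finset.mem_filter, Finset.mem_product]
    have hd1 : (∏ p ∈ A.1, p) ∣ P := by
      rw [← hsP]; exact Finset.prod_dvd_prod_of_subset A.1 s (fun p => p) hA1
    have hd2 : (∏ p ∈ A.2, p) ∣ P := by
      rw [← hsP]; exact Finset.prod_dvd_prod_of_subset A.2 s (fun p => p) hA2
    refine ⟨⟨Nat.mem_divisors.mpr ⟨hd1, hP0.ne'⟩, Nat.mem_divisors.mpr ⟨hd2, hP0.ne'⟩⟩, ?_, ?_⟩
    · rw [← Finset.prod_union hdisj, ← hsP]
      exact Finset.prod_dvd_prod_of_subset _ s (fun p => p) (Finset.union_subset hA1 hA2)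
    · refine Nat.coprime_prod_left_iff.mpr fun p hp => ?_
      refine Nat.coprime_prod_right_iff.mpr fun q hq => ?_
      refine (Nat.coprime_primes (hsp p (hA1 hp)) (hsp q (hA2 hq))).mpr ?_
      rintro rfl
      exact (Finset.disjoint_left.mp hdisj hp) hq
  · -- left inverse
    intro k hk
    rw [Finset.mem_filter, Finset.mem_product] at hk
    obtain ⟨⟨hk1, hk2⟩, hd, hcop⟩ := hk
    have h1 : Squarefree k.1 := hP.squarefree_of_dvd (Nat.mem_divisors.mp hk1).1
    have h2 : Squarefree k.2 := hP.squarefree_of_dvd (Nat.mem_divisors.mp hk2).1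
    exact Prod.ext (Nat.prod_primeFactors_of_squarefree h1)
      (Nat.prod_primeFactors_of_squarefree h2)
  · -- right inverse
    intro A hA
    rw [Finset.mem_filter, Finset.mem_product, Finset.mem_powerset, Finset.mem_powerset] at hA
    obtain ⟨⟨hA1, hA2⟩, hdisj⟩ := hA
    exact Prod.ext (Nat.primeFactors_prod (fun p hp => hsp p (hA1 hp)))
      (Nat.primeFactors_prod (fun p hp => hsp p (hA2 hp)))
  · -- terms agree
    intro k hk
    rw [Finset.mem_filter, Finset.mem_product] at hk
    obtain ⟨⟨hk1, hk2⟩, hd, hcop⟩ := hk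
    have hk10 : k.1 ≠ 0 := (Nat.pos_of_mem_divisors hk1).ne'
    have hk20 : k.2 ≠ 0 := (Nat.pos_of_mem_divisors hk2).ne'
    have hk120 : k.1 * k.2 ≠ 0 := mul_ne_zero hk10 hk20
    have hm0 : P / (k.1 * k.2) ≠ 0 :=
      (Nat.div_pos (Nat.le_of_dvd hP0 hd) (Nat.pos_of_ne_zero hk120)).ne'
    have hPm : (k.1 * k.2) * (P / (k.1 * k.2)) = P := Nat.mul_div_cancel' hd
    have hcop2 : Nat.Coprime (k.1 * k.2) (P / (k.1 * k.2)) :=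
      (Nat.squarefree_mul_iff.mp (hPm.symm ▸ hP)).1
    have hset : (P / (k.1 * k.2)).primeFactors
        = s \ (k.1.primeFactors ∪ k.2.primeFactors) := by
      have hu : s = (k.1 * k.2).primeFactors ∪ (P / (k.1 * k.2)).primeFactors := by
        rw [hs]
        conv_lhs => rw [← hPm]
        rw [Nat.primeFactors_mul hk120 hm0]
      rw [hu, ← Nat.primeFactors_mul hk10 hk20]
      exact (Finset.union_sdiff_cancel_left hcop2.disjoint_primeFactors).symm
    rw [hset]

/-- Rankin-type tail bound: for `P` squarefree with prime factors at most `y` and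
multiplicative `f` with `0 ≤ f(p) ≤ 1/p`, the contribution to the total sum from
pairs of coprime divisors with product exceeding `x^{θ/2}` is
`≪_θ e^{-(θ/6) β log β}` where `β = log x / log y`, once `β` is large enough. -/
theorem stmt10 (θ : ℝ) (hθ0 : 0 < θ) (hθ1 : θ < 1) :
    ∃ C β₀ : ℝ, 0 < C ∧ ∀ (x y : ℝ) (P : ℕ) (f : ℕ → ℝ),
      2 ≤ y → y ≤ x → 0 < P → Squarefree P →
      (∀ p ∈ P.primeFactors, (p : ℝ) ≤ y) →
      f 1 = 1 → (∀ m n : ℕ, Nat.Coprime m n → f (m * n) = f m * f n) →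
      (∀ p : ℕ, p.Prime → 0 ≤ f p ∧ f p ≤ 1 / (p : ℝ)) →
      β₀ ≤ Real.log x / Real.log y →
      ∑ k ∈ (P.divisors ×ˢ P.divisors).filter
          (fun k => k.1 * k.2 ∣ P ∧ Nat.Coprime k.1 k.2 ∧
            x ^ (θ / 2) < ((k.1 * k.2 : ℕ) : ℝ)),
        f k.1 * f k.2 * ∏ p ∈ (P / (k.1 * k.2)).primeFactors, (1 - 2 * f p)
      ≤ C * Real.exp (-(θ / 6) * (Real.log x / Real.log y) *
          Real.log (Real.log x / Real.log y)) := by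
  classical
  refine ⟨1, (288/θ)^2 + 3, one_pos, ?_⟩
  intro x y P f hy2 hyx hP0 hPsf hPy hf1 hfm hfp hβ
  set β := Real.log x / Real.log y with hβdef
  have hy1 : (1:ℝ) < y := by linarith
  have hx0 : (0:ℝ) < x := by linarith
  have hlogy : 0 < Real.log y := Real.log_pos hy1
  have hβ3 : 3 ≤ β := by nlinarith [sq_nonneg (288/θ)]
  have hβpos : 0 < β := by linarith
  have hL1 : 1 ≤ Real.log β := by
    rw [Real.le_log_iff_exp_le hβpos]
    calc Real.exp 1 ≤ 2.7182818286 := Real.exp_one_lt_d9.le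
      _ ≤ 3 := by norm_num
      _ ≤ β := hβ3
  set L := Real.log β with hLdef
  set σ := L / (2 * Real.log y) with hσdef
  have hσ0 : 0 < σ := div_pos (by linarith) (by linarith)
  clear_value β L σ
  have hlogx : Real.log x = β * Real.log y := by
    rw [hβdef, div_mul_cancel₀ _ hlogy.ne']
  -- Step 5: numeric conclusion
  have hyσval : y ^ σ = Real.exp (L/2) := by
    rw [Real.rpow_def_of_pos (by linarith : (0:ℝ) < y)]
    congr 1
    rw [hσdef]
    field_simp
  set E := Real.exp (L/2) with hE
  clear_value E
  have hEpos : 0 < E := by rw [hE]; exact Real.exp_pos _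
  have hE2 : E * E = β := by
    rw [hE, ← Real.exp_add, show L/2 + L/2 = L by ring, hLdef]
    exact Real.exp_log hβpos
  have hEge : 288/θ ≤ E := by
    by_contra hcon
    push_neg at hcon
    have ha : (0:ℝ) < 288/θ := by positivity
    have : E * E < (288/θ) * (288/θ) := by nlinarith
    nlinarith [hβ]
  have harg : Real.log x * (θ/2*σ) = θ/4 * (β * L) := by
    rw [hlogx, hσdef]
    field_simp
    ring
  have hEL : 288/θ ≤ E * L := by
    have := mul_le_mul hEge hL1 zero_le_one hEpos.le
    rwa [mul_one] at this
  have hkey : 24 * E ≤ θ/12 * (β * L) := by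
    have h8 : θ/12 * (β * L) = θ/12 * (E * (E * L)) := by rw [← hE2]; ring
    rw [h8]
    have h9 : θ/12 * (E * (288/θ)) ≤ θ/12 * (E * (E * L)) := by
      apply mul_le_mul_of_nonneg_left _ (by positivity)
      exact mul_le_mul_of_nonneg_left hEL hEpos.le
    have h10 : θ/12 * (E * (288/θ)) = 24 * E := by
      field_simp
      ring
    linarith
  have hfinal : Real.log x * (-(θ/2*σ)) + 24 * E ≤ -(θ/6) * β * L := by
    have : Real.log x * (-(θ/2*σ)) = -(θ/4 * (β * L)) := by
      rw [← harg]; ring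
    rw [this]
    linarith
  -- basic facts about f
  have hfprod : ∀ k : ℕ, k ∣ P → f k = ∏ p ∈ k.primeFactors, f p := by
    intro k hk
    have hsf : Squarefree k := hPsf.squarefree_of_dvd hk
    conv_lhs => rw [← Nat.prod_primeFactors_of_squarefree hsf]
    exact mult_prod f hf1 hfm _ (fun p hp => Nat.prime_of_mem_primeFactors hp)
  have hwnn : ∀ p : ℕ, p.Prime → 0 ≤ 1 - 2 * f p := by
    intro p hp
    have h2 : (2:ℝ) ≤ p := by exact_mod_cast hp.two_le
    have := (hfp p hp).2
    have hinv : (1:ℝ)/p ≤ 1/2 := by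
      apply div_le_div_of_nonneg_left (by norm_num) (by norm_num) h2
    linarith
  set u : ℕ → ℝ := fun p => f p * (p:ℝ)^σ with hu
  set w : ℕ → ℝ := fun p => 1 - 2 * f p with hw
  have hunn : ∀ p : ℕ, p.Prime → 0 ≤ u p :=
    fun p hp => mul_nonneg (hfp p hp).1 (Real.rpow_nonneg (Nat.cast_nonneg p) σ)
  set Xneg : ℝ := x ^ (-(θ/2*σ)) with hXneg
  have hXpos : 0 < Xneg := Real.rpow_pos_of_pos hx0 _
  set W : ℕ × ℕ → ℝ := fun k => Xneg * ((∏ p ∈ k.1.primeFactors, u p) *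
      (∏ p ∈ k.2.primeFactors, u p) *
      ∏ p ∈ (P / (k.1 * k.2)).primeFactors, w p) with hW
  have hWnn : ∀ k : ℕ × ℕ, 0 ≤ W k := by
    intro k
    apply mul_nonneg hXpos.le
    apply mul_nonneg (mul_nonneg ?_ ?_) ?_ <;>
      exact Finset.prod_nonneg fun p hp =>
        (by first
          | exact hunn p (Nat.prime_of_mem_primeFactors hp)
          | exact hwnn p (Nat.prime_of_mem_primeFactors hp))
  -- Step 1: termwise Rankin bound
  have step1 : ∑ k ∈ (P.divisors ×ˢ P.divisors).filter
          (fun k => k.1 * k.2 ∣ P ∧ Nat.Coprime k.1 k.2 ∧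
            x ^ (θ / 2) < ((k.1 * k.2 : ℕ) : ℝ)),
        f k.1 * f k.2 * ∏ p ∈ (P / (k.1 * k.2)).primeFactors, (1 - 2 * f p)
      ≤ ∑ k ∈ (P.divisors ×ˢ P.divisors).filter
          (fun k => k.1 * k.2 ∣ P ∧ Nat.Coprime k.1 k.2), W k := by
    have hsub : (P.divisors ×ˢ P.divisors).filter
          (fun k => k.1 * k.2 ∣ P ∧ Nat.Coprime k.1 k.2 ∧
            x ^ (θ / 2) < ((k.1 * k.2 : ℕ) : ℝ))
        ⊆ (P.divisors ×ˢ P.divisors).filter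
          (fun k => k.1 * k.2 ∣ P ∧ Nat.Coprime k.1 k.2) := by
      intro k hk
      rw [Finset.mem_filter] at hk ⊢
      exact ⟨hk.1, hk.2.1, hk.2.2.1⟩
    refine le_trans (Finset.sum_le_sum ?_) (Finset.sum_le_sum_of_subset_of_nonneg hsub
      (fun k _ _ => hWnn k))
    intro k hk
    rw [Finset.mem_filter, Finset.mem_product] at hk
    obtain ⟨⟨hk1, hk2⟩, hdvd, hcop, hbig⟩ := hk
    have hk1d : k.1 ∣ P := (Nat.mem_divisors.mp hk1).1
    have hk2d : k.2 ∣ P := (Nat.mem_divisors.mp hk2).1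
    have hk10 : 0 < k.1 := Nat.pos_of_mem_divisors hk1
    have hk20 : 0 < k.2 := Nat.pos_of_mem_divisors hk2
    have hsf1 : Squarefree k.1 := hPsf.squarefree_of_dvd hk1d
    have hsf2 : Squarefree k.2 := hPsf.squarefree_of_dvd hk2d
    -- express the u-products
    have hue : ∀ m : ℕ, m ∣ P → ∏ p ∈ m.primeFactors, u p = f m * ((m:ℕ):ℝ)^σ := by
      intro m hmP
      have hmsf : Squarefree m := hPsf.squarefree_of_dvd hmP
      have h1 : ∏ p ∈ m.primeFactors, u p
          = (∏ p ∈ m.primeFactors, f p) * ∏ p ∈ m.primeFactors, ((p:ℕ):ℝ)^σ := by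
        rw [hu, ← Finset.prod_mul_distrib]
      have h2 : ∏ p ∈ m.primeFactors, ((p:ℕ):ℝ)^σ = ((m:ℕ):ℝ)^σ := by
        rw [Real.finset_prod_rpow _ _ (fun p _ => Nat.cast_nonneg p) σ]
        congr 1
        rw [← Nat.cast_prod, Nat.prod_primeFactors_of_squarefree hmsf]
      rw [h1, h2, ← hfprod m hmP]
    rw [hW]
    simp only
    rw [hue k.1 hk1d, hue k.2 hk2d]
    have hwprod_nn : 0 ≤ ∏ p ∈ (P / (k.1*k.2)).primeFactors, w p :=
      Finset.prod_nonneg fun p hp => hwnn p (Nat.prime_of_mem_primeFactors hp)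
    have hf1nn : 0 ≤ f k.1 := by
      rw [hfprod k.1 hk1d]
      exact Finset.prod_nonneg fun p hp => (hfp p (Nat.prime_of_mem_primeFactors hp)).1
    have hf2nn : 0 ≤ f k.2 := by
      rw [hfprod k.2 hk2d]
      exact Finset.prod_nonneg fun p hp => (hfp p (Nat.prime_of_mem_primeFactors hp)).1
    have hcast : ((k.1:ℕ):ℝ)^σ * ((k.2:ℕ):ℝ)^σ = (((k.1*k.2 : ℕ)):ℝ)^σ := by
      rw [← Real.mul_rpow (Nat.cast_nonneg _) (Nat.cast_nonneg _)]
      congr 1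
      push_cast
      ring
    have hxθ : (0:ℝ) < x ^ (θ/2) := Real.rpow_pos_of_pos hx0 _
    have hmono : (x ^ (θ/2))^σ ≤ (((k.1*k.2:ℕ)):ℝ)^σ :=
      Real.rpow_le_rpow hxθ.le hbig.le hσ0.le
    have hXmul : Xneg * (x ^ (θ/2))^σ = 1 := by
      rw [hXneg, ← Real.rpow_mul hx0.le, ← Real.rpow_add hx0]
      norm_num
    have hone : 1 ≤ Xneg * (((k.1*k.2:ℕ)):ℝ)^σ := by
      rw [← hXmul]
      exact mul_le_mul_of_nonneg_left hmono hXpos.le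
    calc f k.1 * f k.2 * ∏ p ∈ (P / (k.1 * k.2)).primeFactors, w p
        = 1 * (f k.1 * f k.2 * ∏ p ∈ (P / (k.1 * k.2)).primeFactors, w p) := (one_mul _).symm
      _ ≤ (Xneg * (((k.1*k.2:ℕ)):ℝ)^σ)
            * (f k.1 * f k.2 * ∏ p ∈ (P / (k.1 * k.2)).primeFactors, w p) :=
          mul_le_mul_of_nonneg_right hone
            (mul_nonneg (mul_nonneg hf1nn hf2nn) hwprod_nn)
      _ = Xneg * (f k.1 * ((k.1:ℕ):ℝ)^σ * (f k.2 * ((k.2:ℕ):ℝ)^σ) *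
            ∏ p ∈ (P / (k.1 * k.2)).primeFactors, w p) := by
          rw [← hcast]; ring
  -- Step 2: evaluate the complete sum
  have step2 : ∑ k ∈ (P.divisors ×ˢ P.divisors).filter
        (fun k => k.1 * k.2 ∣ P ∧ Nat.Coprime k.1 k.2), W k
      = Xneg * ∏ p ∈ P.primeFactors, (u p + u p + w p) := by
    rw [← keyIdentity P hPsf hP0 u w, Finset.mul_sum]
  -- Step 3: bound the product by an exponential
  have step3 : ∏ p ∈ P.primeFactors, (u p + u p + w p)
      ≤ Real.exp (∑ p ∈ P.primeFactors, 2 * ((((p:ℕ):ℝ))^σ - 1) / p) := by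
    rw [Real.exp_sum]
    apply Finset.prod_le_prod
    · intro p hp
      have hpp := Nat.prime_of_mem_primeFactors hp
      have h1 := hunn p hpp
      have h2 := hwnn p hpp
      simp only [hu] at h1
      simp only [hu, hw]
      linarith
    · intro p hp
      have hpp := Nat.prime_of_mem_primeFactors hp
      have hp2 : (2:ℝ) ≤ (p:ℝ) := by exact_mod_cast hpp.two_le
      have hp0 : (0:ℝ) < (p:ℝ) := by linarith
      have hrp1 : 1 ≤ ((p:ℕ):ℝ)^σ := by
        have := Real.rpow_le_rpow_of_exponent_le (by linarith : 1 ≤ (p:ℝ)) hσ0.le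
        rwa [Real.rpow_zero] at this
      have hfle : f p * (((p:ℕ):ℝ)^σ - 1) ≤ (1/(p:ℝ)) * (((p:ℕ):ℝ)^σ - 1) :=
        mul_le_mul_of_nonneg_right (hfp p hpp).2 (by linarith)
      have heq : u p + u p + w p = 1 + 2*(f p * (((p:ℕ):ℝ)^σ - 1)) := by
        simp only [hu, hw]; ring
      rw [heq]
      have hexp := Real.add_one_le_exp (2 * ((((p:ℕ):ℝ))^σ - 1) / p)
      have heq2 : 2*((1/(p:ℝ))*(((p:ℕ):ℝ)^σ-1)) = 2 * ((((p:ℕ):ℝ))^σ - 1) / p := by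
        field_simp
      linarith
  -- Step 4: Chebyshev bound on the prime sum
  have step4 : ∑ p ∈ P.primeFactors, 2 * ((((p:ℕ):ℝ))^σ - 1) / p
      ≤ 24 * y ^ σ := by
    set N := ⌊y⌋₊ with hN
    have hsub2 : P.primeFactors ⊆ (range (N+1)).filter Nat.Prime := by
      intro p hp
      have hpp := Nat.prime_of_mem_primeFactors hp
      have hple : p ≤ N := Nat.le_floor (hPy p hp)
      rw [Finset.mem_filter, Finset.mem_range]
      exact ⟨by omega, hpp⟩
    have hnn : ∀ p ∈ (range (N+1)).filter Nat.Prime,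
        p ∉ P.primeFactors → 0 ≤ 2 * ((((p:ℕ):ℝ))^σ - 1) / p := by
      intro p hp _
      have hpp := (Finset.mem_filter.mp hp).2
      have hp2 : (2:ℝ) ≤ (p:ℝ) := by exact_mod_cast hpp.two_le
      have hrp1 : 1 ≤ ((p:ℕ):ℝ)^σ := by
        have := Real.rpow_le_rpow_of_exponent_le (by linarith : 1 ≤ (p:ℝ)) hσ0.le
        rwa [Real.rpow_zero] at this
      have hnum : (0:ℝ) ≤ 2 * ((((p:ℕ):ℝ))^σ - 1) := by linarith
      exact div_nonneg hnum (by positivity)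
    have h5 : ∑ p ∈ P.primeFactors, 2 * ((((p:ℕ):ℝ))^σ - 1) / p
        ≤ ∑ p ∈ (range (N+1)).filter Nat.Prime, 2 * ((((p:ℕ):ℝ))^σ - 1) / p :=
      Finset.sum_le_sum_of_subset_of_nonneg hsub2 hnn
    have h6 : ∑ p ∈ (range (N+1)).filter Nat.Prime, 2 * ((((p:ℕ):ℝ))^σ - 1) / p
        = 2 * ∑ p ∈ (range (N+1)).filter Nat.Prime, (((p:ℕ):ℝ)^σ - 1) / p := by
      rw [Finset.mul_sum]
      refine Finset.sum_congr rfl fun p _ => ?_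
      ring
    have h7 := cheb σ hσ0 N y hy2 (Nat.floor_le (by linarith : (0:ℝ) ≤ y))
    calc ∑ p ∈ P.primeFactors, 2 * ((((p:ℕ):ℝ))^σ - 1) / p
        ≤ ∑ p ∈ (range (N+1)).filter Nat.Prime, 2 * ((((p:ℕ):ℝ))^σ - 1) / p := h5
      _ = 2 * ∑ p ∈ (range (N+1)).filter Nat.Prime, (((p:ℕ):ℝ)^σ - 1) / p := h6
      _ ≤ 2 * (12 * y ^ σ) := by linarith
      _ = 24 * y ^ σ := by ring
  -- assemble everything
  have hXval : Xneg = Real.exp (Real.log x * (-(θ/2*σ))) := Real.rpow_def_of_pos hx0 _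
  have hprod_nn : ∑ p ∈ P.primeFactors, 2 * ((((p:ℕ):ℝ))^σ - 1) / p ≤ 24 * E := by
    rw [← hyσval]; exact step4
  calc ∑ k ∈ (P.divisors ×ˢ P.divisors).filter
          (fun k => k.1 * k.2 ∣ P ∧ Nat.Coprime k.1 k.2 ∧
            x ^ (θ / 2) < ((k.1 * k.2 : ℕ) : ℝ)),
        f k.1 * f k.2 * ∏ p ∈ (P / (k.1 * k.2)).primeFactors, (1 - 2 * f p)
      ≤ ∑ k ∈ (P.divisors ×ˢ P.divisors).filter
          (fun k => k.1 * k.2 ∣ P ∧ Nat.Coprime k.1 k.2), W k := step1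
    _ = Xneg * ∏ p ∈ P.primeFactors, (u p + u p + w p) := step2
    _ ≤ Xneg * Real.exp (∑ p ∈ P.primeFactors, 2 * ((((p:ℕ):ℝ))^σ - 1) / p) :=
        mul_le_mul_of_nonneg_left step3 hXpos.le
    _ ≤ Xneg * Real.exp (24 * E) := by
        apply mul_le_mul_of_nonneg_left _ hXpos.le
        exact Real.exp_le_exp.mpr hprod_nn
    _ = Real.exp (Real.log x * (-(θ/2*σ)) + 24 * E) := by
        rw [hXval, ← Real.exp_add]
    _ ≤ Real.exp (-(θ/6) * β * L) := Real.exp_le_exp.mpr hfinal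
    _ = 1 * Real.exp (-(θ/6) * β * L) := (one_mul _).symm
end
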